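/- arXiv:1807.11375 — 9 statements merged into one kernel-verified Lean document; each statement's English description precedes it below -/
import Mathlib

section
/- Let P ⊆ ℝ^d be a closed spanning pointed convex cone with interior Ω, and let A ⊆ ℝ^d be a nonempty closed set with A + P ⊆ A and A ≠ ℝ^d. Then for every a ∈ Ω there exists n ≥ 1 such that (A + na) ∩ (−Ω) = ∅. -/
/-- For a proper `P`-module `A` and `a` in the interior of `P`, some translate `A + n • a`
misses `-interior P`. -/
theorem module_translate_misses_neg_interior {d : ℕ}
    (P A : Set (EuclideanSpace ℝ (Fin d)))
    (hclosed : IsClosed P) (hconv : Convex ℝ P)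
    (hcone : ∀ (c : ℝ), 0 ≤ c → ∀ x ∈ P, c • x ∈ P)
    (hspan : ∀ x : EuclideanSpace ℝ (Fin d), ∃ a ∈ P, ∃ b ∈ P, x = a - b)
    (hpointed : P ∩ (-P) = {0})
    (hA_ne : A.Nonempty) (hA_closed : IsClosed A)
    (hA_mod : ∀ x ∈ A, ∀ p ∈ P, x + p ∈ A)
    (hA_proper : A ≠ Set.univ) :
    ∀ a ∈ interior P, ∃ n : ℕ, 1 ≤ n ∧
      ((fun y => y + (n : ℝ) • a) '' A) ∩ (-(interior P)) = ∅ := by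
  intro a ha
  by_contra hcon
  push_neg at hcon
  -- Key lemma: for any v, eventually n • a + v ∈ P
  have key : ∀ v : EuclideanSpace ℝ (Fin d), ∃ N : ℕ, ∀ n ≥ N,
      (n : ℝ) • a + v ∈ P := by
    intro v
    have htend : Filter.Tendsto (fun n : ℕ => a + (n : ℝ)⁻¹ • v)
        Filter.atTop (nhds a) := by
      have h1 : Filter.Tendsto (fun n : ℕ => (n : ℝ)⁻¹ • v)
          Filter.atTop (nhds ((0:ℝ) • v)) :=
        (tendsto_inv_atTop_nhds_zero_nat).smul_const v
      simpa using (tendsto_const_nhds.add h1)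
    have hev : ∀ᶠ n : ℕ in Filter.atTop, a + (n : ℝ)⁻¹ • v ∈ interior P :=
      htend.eventually (isOpen_interior.eventually_mem ha)
    obtain ⟨N, hN⟩ := Filter.eventually_atTop.mp hev
    refine ⟨max N 1, fun n hn => ?_⟩
    have hn1 : 1 ≤ n := le_trans (le_max_right N 1) hn
    have hnN : N ≤ n := le_trans (le_max_left N 1) hn
    have hn0 : (n : ℝ) ≠ 0 := by positivity
    have := hcone (n : ℝ) (by positivity) _ (interior_subset (hN n hnN))
    have heq : (n : ℝ) • (a + (n : ℝ)⁻¹ • v) = (n : ℝ) • a + v := by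
      rw [smul_add, smul_smul, mul_inv_cancel₀ hn0, one_smul]
    rwa [heq] at this
  -- For each n ≥ 1, get the witness, deduce -(n • a) ∈ A
  have hneg : ∀ n : ℕ, 1 ≤ n → -((n : ℝ) • a) ∈ A := by
    intro n hn
    obtain ⟨z, hz1, hz2⟩ := hcon n hn
    obtain ⟨x, hxA, hxz⟩ := hz1
    have hzP : -z ∈ interior P := by
      simpa [Set.mem_neg] using hz2
    have : x + (-z) ∈ A := hA_mod x hxA _ (interior_subset hzP)
    have heq : x + (-z) = -((n : ℝ) • a) := by
      simp only at hxz
      rw [← hxz]; abel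
    rwa [heq] at this
  -- Then A = univ
  apply hA_proper
  ext y
  simp only [Set.mem_univ, iff_true]
  obtain ⟨N, hN⟩ := key y
  have hn1 : 1 ≤ max N 1 := le_max_right N 1
  have h1 : -((max N 1 : ℕ) : ℝ) • a ∈ A := by
    have := hneg (max N 1) hn1
    simpa [neg_smul] using this
  have h2 : ((max N 1 : ℕ) : ℝ) • a + y ∈ P := hN _ (le_max_left N 1)
  have := hA_mod _ h1 _ h2
  have heq : -((max N 1 : ℕ) : ℝ) • a + (((max N 1 : ℕ) : ℝ) • a + y) = y := by
    rw [neg_smul]; abel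
  rwa [heq] at this
end

section
/- Let G be a topological group, P ⊆ ℝ^d a closed spanning pointed convex cone with interior Ω, and φ : Ω → G a continuous map satisfying φ(a+b) = φ(a)φ(b) for all a, b ∈ Ω. Then φ extends uniquely to a continuous group homomorphism from ℝ^d to G. -/
/-- A continuous semigroup homomorphism from the interior of a closed spanning pointed
convex cone into a topological group extends uniquely to a continuous group homomorphism
on all of `ℝ^d`. -/
theorem interior_hom_extends {d : ℕ} {G : Type*}
    [Group G] [TopologicalSpace G] [IsTopologicalGroup G]
    (P : Set (EuclideanSpace ℝ (Fin d)))
    (hclosed : IsClosed P) (hconv : Convex ℝ P)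
    (hcone : ∀ (c : ℝ), 0 ≤ c → ∀ x ∈ P, c • x ∈ P)
    (hspan : ∀ x : EuclideanSpace ℝ (Fin d), ∃ a ∈ P, ∃ b ∈ P, x = a - b)
    (hpointed : P ∩ (-P) = {0})
    (φ : EuclideanSpace ℝ (Fin d) → G)
    (hcont : ContinuousOn φ (interior P))
    (hhom : ∀ a ∈ interior P, ∀ b ∈ interior P, φ (a + b) = φ a * φ b) :
    ∃! ψ : EuclideanSpace ℝ (Fin d) → G,
      Continuous ψ ∧ (∀ x y, ψ (x + y) = ψ x * ψ y) ∧ ∀ a ∈ interior P, ψ a = φ a := by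
  set Ω := interior P with hΩ
  -- P is closed under addition
  have hPadd : ∀ a ∈ P, ∀ b ∈ P, a + b ∈ P := by
    intro a ha b hb
    have hmid : (1/2 : ℝ) • a + (1/2 : ℝ) • b ∈ P :=
      hconv ha hb (by norm_num) (by norm_num) (by norm_num)
    have h2 := hcone 2 (by norm_num) _ hmid
    convert h2 using 1
    module
  -- translating the interior by an element of P stays in the interior
  have hPΩ : ∀ a ∈ P, ∀ x ∈ Ω, a + x ∈ Ω := by
    intro a ha x hx
    have hopen : IsOpenMap (fun y : EuclideanSpace ℝ (Fin d) => a + y) :=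
      isOpenMap_add_left a
    have h1 : a + x ∈ (fun y => a + y) '' Ω := ⟨x, hx, rfl⟩
    have h2 : (fun y => a + y) '' Ω ⊆ interior ((fun y => a + y) '' P) :=
      hopen.image_interior_subset P
    have h3 : (fun y => a + y) '' P ⊆ P := by
      rintro _ ⟨b, hb, rfl⟩; exact hPadd a ha b hb
    exact interior_mono h3 (h2 h1)
  have hΩΩ : ∀ a ∈ Ω, ∀ b ∈ Ω, a + b ∈ Ω := fun a ha b hb =>
    hPΩ a (interior_subset ha) b hb
  -- the interior is nonempty
  have h0P : (0 : EuclideanSpace ℝ (Fin d)) ∈ P := by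
    obtain ⟨a, ha, -, -, -⟩ := hspan 0
    simpa using hcone 0 le_rfl a ha
  have hspanTop : affineSpan ℝ P = ⊤ := by
    rw [eq_top_iff]
    intro x _
    obtain ⟨a, ha, b, hb, hab⟩ := hspan x
    have := AffineSubspace.smul_vsub_vadd_mem (affineSpan ℝ P) (1 : ℝ)
      (subset_affineSpan ℝ P ha) (subset_affineSpan ℝ P hb) (subset_affineSpan ℝ P h0P)
    simpa [hab] using this
  have hΩne : Ω.Nonempty := by
    rw [hΩ, hconv.interior_nonempty_iff_affineSpan_eq_top]
    exact hspanTop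
  obtain ⟨e, he⟩ := hΩne
  -- decomposition: every x can be translated into Ω by an element of Ω
  have hdec : ∀ x : EuclideanSpace ℝ (Fin d), ∃ b ∈ Ω, x + b ∈ Ω := by
    intro x
    obtain ⟨a, ha, b, hb, hab⟩ := hspan x
    refine ⟨b + e, hPΩ b hb e he, ?_⟩
    have : x + (b + e) = a + e := by rw [hab]; abel
    rw [this]
    exact hPΩ a ha e he
  -- commutativity of φ-values on Ω
  have hcomm : ∀ a ∈ Ω, ∀ b ∈ Ω, Commute (φ a) (φ b) := by
    intro a ha b hb
    have : φ (a + b) = φ (b + a) := by rw [add_comm]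
    rw [hhom a ha b hb, hhom b hb a ha] at this
    exact this
  choose β hβΩ hβx using hdec
  set ψ : EuclideanSpace ℝ (Fin d) → G := fun x => φ (x + β x) * (φ (β x))⁻¹ with hψdef
  -- well-definedness
  have hψ : ∀ x, ∀ b ∈ Ω, x + b ∈ Ω → ψ x = φ (x + b) * (φ b)⁻¹ := by
    intro x b hb hxb
    have key : φ (x + β x) * φ b = φ (x + b) * φ (β x) := by
      have h1 : φ ((x + β x) + b) = φ (x + β x) * φ b := hhom _ (hβx x) _ hb
      have h2 : φ ((x + b) + β x) = φ (x + b) * φ (β x) := hhom _ hxb _ (hβΩ x)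
      rw [← h1, ← h2, show (x + β x) + b = (x + b) + β x by abel]
    have hc : Commute (φ b)⁻¹ (φ (β x))⁻¹ := (hcomm b hb _ (hβΩ x)).inv_inv
    rw [hψdef]
    calc φ (x + β x) * (φ (β x))⁻¹
        = φ (x + β x) * φ b * (φ b)⁻¹ * (φ (β x))⁻¹ := by group
      _ = φ (x + b) * φ (β x) * (φ b)⁻¹ * (φ (β x))⁻¹ := by rw [key]
      _ = φ (x + b) * φ (β x) * ((φ b)⁻¹ * (φ (β x))⁻¹) := by group
      _ = φ (x + b) * φ (β x) * ((φ (β x))⁻¹ * (φ b)⁻¹) := by rw [hc.eq]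
      _ = φ (x + b) * (φ b)⁻¹ := by group
  -- ψ agrees with φ on Ω
  have hagree : ∀ a ∈ Ω, ψ a = φ a := by
    intro a ha
    rw [hψ a e he (hΩΩ a ha e he), hhom a ha e he, mul_inv_cancel_right]
  -- ψ is a homomorphism
  have hhom' : ∀ x y, ψ (x + y) = ψ x * ψ y := by
    intro x y
    have hb := hβΩ x; have hc := hβΩ y
    have hxb := hβx x; have hyc := hβx y
    have hbc : β x + β y ∈ Ω := hΩΩ _ hb _ hc
    have hsum : (x + y) + (β x + β y) ∈ Ω := by
      rw [show (x + y) + (β x + β y) = (x + β x) + (y + β y) by abel]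
      exact hΩΩ _ hxb _ hyc
    rw [hψ (x + y) _ hbc hsum, hψ x _ hb hxb, hψ y _ hc hyc]
    rw [show (x + y) + (β x + β y) = (x + β x) + (y + β y) by abel]
    rw [hhom _ hxb _ hyc, hhom _ hb _ hc]
    have c1 : Commute (φ (y + β y)) (φ (β x))⁻¹ := (hcomm _ hyc _ hb).inv_right
    have c2 : Commute (φ (β y)) (φ (β x)) := hcomm _ hc _ hb
    calc φ (x + β x) * φ (y + β y) * (φ (β x) * φ (β y))⁻¹
        = φ (x + β x) * (φ (y + β y) * ((φ (β y))⁻¹ * (φ (β x))⁻¹)) := by group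
      _ = φ (x + β x) * (φ (y + β y) * ((φ (β x))⁻¹ * (φ (β y))⁻¹)) := by
            rw [(c2.inv_inv).eq]
      _ = φ (x + β x) * ((φ (y + β y) * (φ (β x))⁻¹) * (φ (β y))⁻¹) := by group
      _ = φ (x + β x) * (((φ (β x))⁻¹ * φ (y + β y)) * (φ (β y))⁻¹) := by rw [c1.eq]
      _ = φ (x + β x) * (φ (β x))⁻¹ * (φ (y + β y) * (φ (β y))⁻¹) := by group
  -- ψ is continuous
  have hcontψ : Continuous ψ := by
    rw [continuous_iff_continuousAt]
    intro x₀
    set b := β x₀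
    have hb : b ∈ Ω := hβΩ x₀
    have hU : IsOpen {x : EuclideanSpace ℝ (Fin d) | x + b ∈ Ω} :=
      isOpen_interior.preimage (continuous_id.add continuous_const)
    have hx₀U : x₀ ∈ {x | x + b ∈ Ω} := hβx x₀
    have heq : ∀ x ∈ {x | x + b ∈ Ω}, ψ x = φ (x + b) * (φ b)⁻¹ := fun x hx =>
      hψ x b hb hx
    have hca : ContinuousAt (fun x => φ (x + b) * (φ b)⁻¹) x₀ := by
      have h1 : ContinuousAt φ (x₀ + b) :=
        hcont.continuousAt (isOpen_interior.mem_nhds hx₀U)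
      exact ((ContinuousAt.comp (x := x₀) (f := fun x => x + b) h1
        ((continuous_add_right b).continuousAt)).mul continuousAt_const)
    refine hca.congr ?_
    filter_upwards [hU.mem_nhds hx₀U] with x hx
    exact (heq x hx).symm
  refine ⟨ψ, ⟨hcontψ, hhom', hagree⟩, ?_⟩
  -- uniqueness
  rintro ψ' ⟨-, hhom'', hagree'⟩
  funext x
  have hb := hβΩ x; have hxb := hβx x
  have h1 : ψ' x * φ (β x) = φ (x + β x) := by
    rw [← hagree' _ hb, ← hhom'', hagree' _ hxb]
  have h2 : ψ x * φ (β x) = φ (x + β x) := by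
    rw [← hagree _ hb, ← hhom', hagree _ hxb]
  exact mul_right_cancel (h1.trans h2.symm)
end

section
/- Let V : P → B(K) be a strictly continuous isometric representation of a closed spanning pointed convex cone P with interior Ω, and let h : Ω → K be a continuous map satisfying V_a* h_a = 0 and h_{a+b} = h_a + V_a h_b for all a, b ∈ Ω. Then there exists μ ∈ ℝ^d such that ‖h_a‖² = ⟨μ, a⟩ for every a ∈ Ω. -/
open ContinuousLinearMap

/-- The squared norm of an `Ω`-additive cocycle of a strictly continuous isometric
representation is linear: `‖h_a‖² = ⟨μ, a⟩` for some `μ ∈ ℝ^d`. -/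
theorem additive_cocycle_norm_sq_linear {d : ℕ}
    {K : Type*} [NormedAddCommGroup K] [InnerProductSpace ℂ K] [CompleteSpace K]
    (P : Set (EuclideanSpace ℝ (Fin d)))
    (hclosed : IsClosed P) (hconv : Convex ℝ P)
    (hcone : ∀ (c : ℝ), 0 ≤ c → ∀ x ∈ P, c • x ∈ P)
    (hspan : ∀ x : EuclideanSpace ℝ (Fin d), ∃ a ∈ P, ∃ b ∈ P, x = a - b)
    (hpointed : P ∩ (-P) = {0})
    (V : EuclideanSpace ℝ (Fin d) → K →L[ℂ] K)
    (hiso : ∀ x ∈ P, ∀ ξ : K, ‖V x ξ‖ = ‖ξ‖)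
    (hsem : ∀ x ∈ P, ∀ y ∈ P, V (x + y) = V x ∘L V y)
    (hstrong : ∀ ξ : K, ContinuousOn (fun x => V x ξ) P)
    (hadj : ∀ ξ : K, ContinuousOn (fun x => ContinuousLinearMap.adjoint (V x) ξ) P)
    (h : EuclideanSpace ℝ (Fin d) → K)
    (hcont : ContinuousOn h (interior P))
    (hker : ∀ a ∈ interior P, ContinuousLinearMap.adjoint (V a) (h a) = 0)
    (hcoc : ∀ a ∈ interior P, ∀ b ∈ interior P, h (a + b) = h a + V a (h b)) :
    ∃ μ : EuclideanSpace ℝ (Fin d), ∀ a ∈ interior P, ‖h a‖ ^ 2 = (inner ℝ μ a : ℝ) := by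
  classical
  by_cases hne : (interior P).Nonempty
  swap
  · exact ⟨0, fun a ha => absurd ⟨a, ha⟩ hne⟩
  obtain ⟨a₀, ha₀⟩ := hne
  -- P is closed under addition
  have hPP : ∀ a ∈ P, ∀ b ∈ P, a + b ∈ P := by
    intro a ha b hb
    have h2 : (2:ℝ) • ((1/2 : ℝ) • a + (1/2:ℝ) • b) ∈ P := by
      refine hcone 2 (by norm_num) _ ?_
      exact hconv ha hb (by norm_num) (by norm_num) (by norm_num)
    have : (2:ℝ) • ((1/2 : ℝ) • a + (1/2:ℝ) • b) = a + b := by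
      rw [smul_add, smul_smul, smul_smul]; norm_num
    rwa [this] at h2
  -- interior P + P ⊆ interior P
  have hΩP : ∀ a ∈ interior P, ∀ b ∈ P, a + b ∈ interior P := by
    intro a ha b hb
    have hmem : a + b ∈ (fun x => x + b) '' interior P := ⟨a, ha, rfl⟩
    have hopen : IsOpen ((fun x => x + b) '' interior P) :=
      (Homeomorph.addRight b).isOpenMap _ isOpen_interior
    have hsub : (fun x => x + b) '' interior P ⊆ P := by
      rintro _ ⟨x, hx, rfl⟩
      exact hPP x (interior_subset hx) b hb
    exact interior_maximal hsub hopen hmem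
  have hΩΩ : ∀ a ∈ interior P, ∀ b ∈ interior P, a + b ∈ interior P :=
    fun a ha b hb => hΩP a ha b (interior_subset hb)
  -- the squared norm is additive on the interior
  set f : EuclideanSpace ℝ (Fin d) → ℝ := fun a => ‖h a‖ ^ 2 with hf
  have hfadd : ∀ a ∈ interior P, ∀ b ∈ interior P, f (a + b) = f a + f b := by
    intro a ha b hb
    have h1 : h (a + b) = h a + V a (h b) := hcoc a ha b hb
    have h2 : (inner ℂ (h a) (V a (h b)) : ℂ) = 0 := by
      rw [← ContinuousLinearMap.adjoint_inner_left, hker a ha, inner_zero_left]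
    have h3 : ‖V a (h b)‖ = ‖h b‖ := hiso a (interior_subset ha) (h b)
    simp only [hf, h1, norm_add_sq (𝕜 := ℂ), h2, h3, map_zero]
    ring
  have hfc : ContinuousOn f (interior P) := (hcont.norm).pow 2
  -- the extension of f to the whole space
  choose A hA B hB hAB using hspan
  set g : EuclideanSpace ℝ (Fin d) → ℝ :=
    fun x => f (A x + a₀) - f (B x + a₀) with hg
  have hAΩ : ∀ x, A x + a₀ ∈ interior P := by
    intro x
    have := hΩP a₀ ha₀ (A x) (hA x); rwa [add_comm] at this
  have hBΩ : ∀ x, B x + a₀ ∈ interior P := by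
    intro x
    have := hΩP a₀ ha₀ (B x) (hB x); rwa [add_comm] at this
  -- well-definedness
  have hwd : ∀ x, ∀ a ∈ interior P, ∀ b ∈ interior P, x = a - b → g x = f a - f b := by
    intro x a ha b hb hx
    have hx' : A x + a₀ - (B x + a₀) = a - b := by
      have h0 : A x - B x = a - b := (hAB x).symm.trans hx
      rw [← h0]; abel
    have hadd : A x + a₀ + b = a + (B x + a₀) := by
      rw [sub_eq_sub_iff_add_eq_add] at hx'; exact hx'
    have h1 : f (A x + a₀ + b) = f (A x + a₀) + f b := hfadd _ (hAΩ x) b hb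
    have h2 : f (a + (B x + a₀)) = f a + f (B x + a₀) := hfadd a ha _ (hBΩ x)
    rw [hadd, h2] at h1
    simp only [hg]
    linarith
  -- g is additive
  have hgadd : ∀ x y, g (x + y) = g x + g y := by
    intro x y
    have hx : x = (A x + a₀) - (B x + a₀) := (hAB x).trans (by abel)
    have hy : y = (A y + a₀) - (B y + a₀) := (hAB y).trans (by abel)
    have hxy : x + y = ((A x + a₀) + (A y + a₀)) - ((B x + a₀) + (B y + a₀)) := by
      conv_lhs => rw [hx, hy]
      abel
    have h1 := hwd (x + y) _ (hΩΩ _ (hAΩ x) _ (hAΩ y)) _ (hΩΩ _ (hBΩ x) _ (hBΩ y)) hxy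
    rw [h1, hfadd _ (hAΩ x) _ (hAΩ y), hfadd _ (hBΩ x) _ (hBΩ y)]
    have h2 := hwd x _ (hAΩ x) _ (hBΩ x) hx
    have h3 := hwd y _ (hAΩ y) _ (hBΩ y) hy
    rw [h2, h3]; ring
  -- g is continuous
  have hgcont : Continuous g := by
    rw [continuous_iff_continuousAt]
    intro x₀
    set c := B x₀ + a₀ with hc
    have hcΩ : c ∈ interior P := hBΩ x₀
    have hx₀c : x₀ + c ∈ interior P := by
      have h0 := hAB x₀
      have heq0 : x₀ + c = A x₀ + a₀ := by
        calc x₀ + c = (A x₀ - B x₀) + (B x₀ + a₀) := by rw [← h0]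
          _ = A x₀ + a₀ := by abel
      rw [heq0]; exact hAΩ x₀
    have hU : {x | x + c ∈ interior P} ∈ nhds x₀ := by
      have : IsOpen {x | x + c ∈ interior P} :=
        isOpen_interior.preimage (continuous_id.add continuous_const)
      exact this.mem_nhds hx₀c
    have heq : ∀ x ∈ {x | x + c ∈ interior P}, g x = f (x + c) - f c := by
      intro x hx
      exact hwd x (x + c) hx c hcΩ (by abel)
    have hca : ContinuousAt (fun x => f (x + c) - f c) x₀ := by
      have h1 : ContinuousAt f (x₀ + c) :=
        hfc.continuousAt (isOpen_interior.mem_nhds hx₀c)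
      have h2 : ContinuousAt (fun x : EuclideanSpace ℝ (Fin d) => x + c) x₀ :=
        (continuous_id.add continuous_const).continuousAt
      have h3 := ContinuousAt.comp (x := x₀) h1 h2
      exact h3.sub continuousAt_const
    refine hca.congr ?_
    filter_upwards [hU] with x hx
    exact (heq x hx).symm
  -- g is linear
  set L : EuclideanSpace ℝ (Fin d) →L[ℝ] ℝ :=
    AddMonoidHom.toRealLinearMap (AddMonoidHom.mk' g (fun x y => hgadd x y)) hgcont with hL
  have hLg : ∀ x, L x = g x := fun x => rfl
  set μ : EuclideanSpace ℝ (Fin d) :=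
    (WithLp.equiv 2 (Fin d → ℝ)).symm (fun i => L (EuclideanSpace.single i 1)) with hμdef
  have hμi : ∀ i, μ i = L (EuclideanSpace.single i 1) := fun i => rfl
  refine ⟨μ, ?_⟩
  intro a ha
  -- f a = g a
  have hfg : f a = g a := by
    have h1 := hwd a (a + a₀) (hΩP a ha a₀ (interior_subset ha₀)) a₀ ha₀ (by abel)
    rw [h1, hfadd a ha a₀ ha₀]; ring
  -- g a = inner μ a
  have hdecomp : a = ∑ i, a i • EuclideanSpace.single i (1:ℝ) := by
    ext j
    rw [WithLp.ofLp_sum, Finset.sum_apply]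
    simp [EuclideanSpace.single_apply]
  have hLa : L a = ∑ i, a i * L (EuclideanSpace.single i 1) := by
    conv_lhs => rw [hdecomp]
    rw [map_sum]
    simp [smul_eq_mul]
  have hμ : (inner ℝ μ a : ℝ) = ∑ i, L (EuclideanSpace.single i 1) * a i := by
    simp [PiLp.inner_apply, RCLike.inner_apply, hμi, mul_comm]
  show f a = _
  rw [hμ, hfg, ← hLg, hLa]
  exact Finset.sum_congr rfl fun i _ => mul_comm _ _
end

section
/- Let P ⊆ ℝ^d be a closed spanning pointed convex cone and A a strictly upper triangular d × d real matrix. If the multiplier ω_A(x,y) = exp(i⟨Ax, y⟩) on P is a coboundary (i.e., ω_A(x,y) = f(x)f(y)f(x+y)^{-1} for some continuous f : P → 𝕋), then A = 0. -/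
/-- If `A` is a strictly upper triangular real `d × d` matrix and the multiplier
`ω_A(x,y) = exp(i⟨Ax, y⟩)` on a closed spanning pointed convex cone `P` is a coboundary,
then `A = 0`. -/
theorem strictly_upper_triangular_coboundary_eq_zero {d : ℕ}
    (P : Set (EuclideanSpace ℝ (Fin d)))
    (hclosed : IsClosed P) (hconv : Convex ℝ P)
    (hcone : ∀ (c : ℝ), 0 ≤ c → ∀ x ∈ P, c • x ∈ P)
    (hspan : ∀ x : EuclideanSpace ℝ (Fin d), ∃ a ∈ P, ∃ b ∈ P, x = a - b)
    (hpointed : P ∩ (-P) = {0})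
    (A : Matrix (Fin d) (Fin d) ℝ)
    (hupper : ∀ i j : Fin d, j ≤ i → A i j = 0)
    (f : EuclideanSpace ℝ (Fin d) → ℂ)
    (hf_cont : ContinuousOn f P)
    (hf_unit : ∀ x ∈ P, ‖f x‖ = 1)
    (hcobound : ∀ x ∈ P, ∀ y ∈ P,
      Complex.exp (Complex.I * ((∑ i, (∑ j, A i j * x j) * y i : ℝ) : ℂ))
        = f x * f y * (f (x + y))⁻¹) :
    A = 0 := by
  set B : EuclideanSpace ℝ (Fin d) → EuclideanSpace ℝ (Fin d) → ℝ :=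
    fun x y => ∑ i, (∑ j, A i j * x j) * y i with hBdef
  have Bsmul : ∀ (t : ℝ) (x y : EuclideanSpace ℝ (Fin d)), B (t • x) y = t * B x y := by
    intro t x y
    simp only [hBdef, Finset.mul_sum]
    refine Finset.sum_congr rfl fun i _ => ?_
    have h1 : (∑ j, A i j * (t • x) j) = t * ∑ j, A i j * x j := by
      rw [Finset.mul_sum]
      refine Finset.sum_congr rfl fun j _ => ?_
      simp [PiLp.smul_apply, smul_eq_mul]; ring
    rw [h1]; ring
  have key : ∀ x ∈ P, ∀ y ∈ P, Complex.exp (Complex.I * (B x y : ℂ))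
      = Complex.exp (Complex.I * (B y x : ℂ)) := by
    intro x hx y hy
    rw [hcobound x hx y hy, hcobound y hy x hx, add_comm y x, mul_comm (f y) (f x)]
  -- symmetry on P
  have symP : ∀ x ∈ P, ∀ y ∈ P, B x y = B y x := by
    intro x hx y hy
    by_contra hne
    set c : ℝ := B x y - B y x with hc
    have hc0 : c ≠ 0 := sub_ne_zero.mpr hne
    set t : ℝ := Real.pi / c with ht
    have habs : |t| * c = Real.pi ∨ |t| * c = -Real.pi := by
      rcases abs_choice t with h | h
      · left; rw [h, ht]; field_simp
      · right; rw [h, ht]; field_simp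
    have htP : |t| • x ∈ P := hcone _ (abs_nonneg t) x hx
    have h1 := key _ htP y hy
    rw [Bsmul] at h1
    have h2 : B y (|t| • x) = |t| * B y x := by
      simp only [hBdef, Finset.mul_sum]
      refine Finset.sum_congr rfl fun i _ => ?_
      have : (|t| • x) i = |t| * x i := by simp [PiLp.smul_apply, smul_eq_mul]
      rw [this]; ring
    rw [h2] at h1
    have h3 : Complex.exp (Complex.I * ((|t| * B x y : ℝ) : ℂ)
        - Complex.I * ((|t| * B y x : ℝ) : ℂ)) = 1 := by
      rw [Complex.exp_sub, h1, div_self (Complex.exp_ne_zero _)]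
    have h4 : Complex.I * ((|t| * B x y : ℝ) : ℂ) - Complex.I * ((|t| * B y x : ℝ) : ℂ)
        = ((|t| * c : ℝ) : ℂ) * Complex.I := by
      rw [hc]; push_cast; ring
    rw [h4] at h3
    rcases habs with h | h
    · rw [h] at h3
      rw [Complex.exp_pi_mul_I] at h3
      norm_num at h3
    · rw [h] at h3
      have : Complex.exp (((-Real.pi : ℝ) : ℂ) * Complex.I) = -1 := by
        push_cast
        rw [neg_mul, Complex.exp_neg, Complex.exp_pi_mul_I]
        norm_num
      rw [this] at h3
      norm_num at h3
  -- extend to all vectors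
  have Bsub_left : ∀ (a b y : EuclideanSpace ℝ (Fin d)), B (a - b) y = B a y - B b y := by
    intro a b y
    simp only [hBdef, ← Finset.sum_sub_distrib]
    refine Finset.sum_congr rfl fun i _ => ?_
    have h1 : (∑ j, A i j * (a - b) j) = (∑ j, A i j * a j) - ∑ j, A i j * b j := by
      rw [← Finset.sum_sub_distrib]
      refine Finset.sum_congr rfl fun j _ => ?_
      have : (a - b) j = a j - b j := rfl
      rw [this]; ring
    rw [h1]; ring
  have Bsub_right : ∀ (x a b : EuclideanSpace ℝ (Fin d)), B x (a - b) = B x a - B x b := by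
    intro x a b
    simp only [hBdef, ← Finset.sum_sub_distrib]
    refine Finset.sum_congr rfl fun i _ => ?_
    have : (a - b) i = a i - b i := rfl
    rw [this]; ring
  have symAll : ∀ x y : EuclideanSpace ℝ (Fin d), B x y = B y x := by
    intro x y
    obtain ⟨a, ha, b, hb, hx⟩ := hspan x
    obtain ⟨a', ha', b', hb', hy⟩ := hspan y
    subst hx hy
    simp only [Bsub_left, Bsub_right]
    rw [symP a ha a' ha', symP a ha b' hb', symP b hb a' ha', symP b hb b' hb']
    ring
  have hsym : ∀ k l : Fin d, A k l = A l k := by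
    intro k l
    have h := symAll (EuclideanSpace.single l 1) (EuclideanSpace.single k 1)
    simp only [hBdef] at h
    have e1 : ∀ (m : Fin d) (i : Fin d), (EuclideanSpace.single m (1:ℝ)) i = if i = m then 1 else 0 := by
      intro m i; simp [EuclideanSpace.single_apply]
    simp only [e1, mul_ite, mul_one, mul_zero, Finset.sum_ite_eq', Finset.mem_univ,
      if_true, ite_mul, one_mul, zero_mul] at h
    exact h
  ext i j
  rcases le_or_gt j i with h | h
  · simp [hupper i j h]
  · rw [hsym i j, hupper j i h.le]; simp
end

section
/- Let K₁, K₂, K₃ be complex Hilbert spaces and U_σ the unitary on K₁ ⊗ K₂ ⊗ K₃ flipping the first and second tensor components. If f₁ ⊗ F₂₃ = U_σ(g₂ ⊗ G₁₃) for some nonzero f₁ ∈ K₁, F₂₃ ∈ K₂ ⊗ K₃, g₂ ∈ K₂, G₁₃ ∈ K₁ ⊗ K₃, then there exists f₃ ∈ K₃ such that f₁ ⊗ F₂₃ = f₁ ⊗ g₂ ⊗ f₃. -/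
open scoped TensorProduct

/-- If `f₁ ⊗ F₂₃ = U_σ (g₂ ⊗ G₁₃)` where `U_σ` flips the first and second tensor
components, and `f₁ ≠ 0`, then `F₂₃ = g₂ ⊗ f₃` for some `f₃`. -/
theorem flip_tensor_factorization
    {K₁ K₂ K₃ : Type*}
    [NormedAddCommGroup K₁] [InnerProductSpace ℂ K₁]
    [NormedAddCommGroup K₂] [InnerProductSpace ℂ K₂]
    [NormedAddCommGroup K₃] [InnerProductSpace ℂ K₃]
    (U : (K₂ ⊗[ℂ] (K₁ ⊗[ℂ] K₃)) ≃ₗ[ℂ] (K₁ ⊗[ℂ] (K₂ ⊗[ℂ] K₃)))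
    (hU : ∀ (x : K₁) (y : K₂) (z : K₃),
      U (y ⊗ₜ (x ⊗ₜ z)) = x ⊗ₜ[ℂ] (y ⊗ₜ[ℂ] z))
    (f₁ : K₁) (F₂₃ : K₂ ⊗[ℂ] K₃) (g₂ : K₂) (G₁₃ : K₁ ⊗[ℂ] K₃)
    (hf₁ : f₁ ≠ 0)
    (heq : f₁ ⊗ₜ[ℂ] F₂₃ = U (g₂ ⊗ₜ[ℂ] G₁₃)) :
    ∃ f₃ : K₃, f₁ ⊗ₜ[ℂ] F₂₃ = f₁ ⊗ₜ[ℂ] (g₂ ⊗ₜ[ℂ] f₃) := by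
  set φ : K₁ →ₗ[ℂ] ℂ := (innerSL ℂ f₁ : K₁ →L[ℂ] ℂ).toLinearMap with hφ
  set L : K₁ ⊗[ℂ] (K₂ ⊗[ℂ] K₃) →ₗ[ℂ] K₂ ⊗[ℂ] K₃ :=
    (TensorProduct.lid ℂ (K₂ ⊗[ℂ] K₃)).toLinearMap ∘ₗ
      TensorProduct.map φ LinearMap.id with hL
  set L3 : K₁ ⊗[ℂ] K₃ →ₗ[ℂ] K₃ :=
    (TensorProduct.lid ℂ K₃).toLinearMap ∘ₗ TensorProduct.map φ LinearMap.id with hL3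
  have key : ∀ G : K₁ ⊗[ℂ] K₃,
      L (U (g₂ ⊗ₜ[ℂ] G)) = g₂ ⊗ₜ[ℂ] (L3 G) := by
    intro G
    induction G using TensorProduct.induction_on with
    | zero => simp
    | tmul x z =>
        rw [hU x g₂ z]
        simp only [hL, hL3, LinearMap.comp_apply, TensorProduct.map_tmul,
          LinearMap.id_apply, LinearEquiv.coe_coe, TensorProduct.lid_tmul,
          TensorProduct.tmul_smul]
    | add a b ha hb =>
        simp only [TensorProduct.tmul_add, map_add, ha, hb]
  have h1 : L (f₁ ⊗ₜ[ℂ] F₂₃) = (inner ℂ f₁ f₁ : ℂ) • F₂₃ := by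
    simp [hL, hφ]
  have h2 := congrArg L heq
  rw [h1, key] at h2
  have hne : (inner ℂ f₁ f₁ : ℂ) ≠ 0 := inner_self_ne_zero.2 hf₁
  refine ⟨(inner ℂ f₁ f₁ : ℂ)⁻¹ • L3 G₁₃, ?_⟩
  have : F₂₃ = g₂ ⊗ₜ[ℂ] ((inner ℂ f₁ f₁ : ℂ)⁻¹ • L3 G₁₃) := by
    rw [TensorProduct.tmul_smul, ← h2, smul_smul, inv_mul_cancel₀ hne, one_smul]
  rw [this]
end

section
/- Let α be an E₀-semigroup over P on B(H) and let ω₁, ω₂ be multipliers on P. If α admits both an ω₁-unit and an ω₂-unit, then ω₁ and ω₂ are cohomologous, i.e., there exists a continuous g : P → 𝕋 with ω₁(x,y)g(x)g(y)g(x+y)^{-1} = ω₂(x,y) for all x, y ∈ P. -/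
open ContinuousLinearMap

lemma coho_alg (A B cx cy nx ny : ℂ) (hA : A ≠ 0)
    (hcx : cx ≠ 0) (hcy : cy ≠ 0) (hnx : nx ≠ 0) (hny : ny ≠ 0)
    (hconj : B * (starRingEnd ℂ) B = 1) :
    A * (cx / nx) * (cy / ny) * ((starRingEnd ℂ) B * A * (cx * cy) / (nx * ny))⁻¹ = B := by
  have hBc : (starRingEnd ℂ) B ≠ 0 := by
    intro h; rw [h, mul_zero] at hconj; exact one_ne_zero hconj.symm
  field_simp
  linear_combination -hconj

lemma commutant_scalar' {H : Type*} [NormedAddCommGroup H] [InnerProductSpace ℂ H]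
    [CompleteSpace H] (e : H) (he : ‖e‖ = 1) (A : H →L[ℂ] H)
    (hA : ∀ T : H →L[ℂ] H, A ∘L T = T ∘L A) :
    A = (inner ℂ e (A e) : ℂ) • (1 : H →L[ℂ] H) := by
  ext ξ
  have h := congrArg (fun S : H →L[ℂ] H => S e) (hA ((innerSL ℂ e).smulRight ξ))
  simp only [coe_comp', Function.comp_apply, smulRight_apply, innerSL_apply_apply] at h
  have hee : (inner ℂ e e : ℂ) = 1 := by
    rw [inner_self_eq_norm_sq_to_K, he]; norm_num
  rw [hee, one_smul] at h
  simpa using h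

/-- If an E₀-semigroup over a cone `P` admits both an ω₁-unit and an ω₂-unit, then the
multipliers ω₁ and ω₂ are cohomologous. -/
theorem units_multipliers_cohomologous {d : ℕ}
    {H : Type*} [NormedAddCommGroup H] [InnerProductSpace ℂ H] [CompleteSpace H]
    (P : Set (EuclideanSpace ℝ (Fin d)))
    (hclosed : IsClosed P) (hconv : Convex ℝ P)
    (hcone : ∀ (c : ℝ), 0 ≤ c → ∀ x ∈ P, c • x ∈ P)
    (hspan : ∀ x : EuclideanSpace ℝ (Fin d), ∃ a ∈ P, ∃ b ∈ P, x = a - b)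
    (hpointed : P ∩ (-P) = {0})
    (α : EuclideanSpace ℝ (Fin d) → (H →L[ℂ] H) →⋆ₐ[ℂ] (H →L[ℂ] H))
    (hsem : ∀ x ∈ P, ∀ y ∈ P, ∀ A : H →L[ℂ] H, α x (α y A) = α (x + y) A)
    (hzero : ∀ A : H →L[ℂ] H, α 0 A = A)
    (hweak : ∀ (A : H →L[ℂ] H) (ξ η : H),
      ContinuousOn (fun x => (inner ℂ (α x A ξ) η : ℂ)) P)
    (ω₁ ω₂ : EuclideanSpace ℝ (Fin d) → EuclideanSpace ℝ (Fin d) → ℂ)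
    (hω₁_cont : ContinuousOn (fun p : EuclideanSpace ℝ (Fin d) × EuclideanSpace ℝ (Fin d) =>
      ω₁ p.1 p.2) (P ×ˢ P))
    (hω₁_unit : ∀ x ∈ P, ∀ y ∈ P, ‖ω₁ x y‖ = 1)
    (hω₁_mult : ∀ x ∈ P, ∀ y ∈ P, ∀ z ∈ P, ω₁ x y * ω₁ (x + y) z = ω₁ x (y + z) * ω₁ y z)
    (hω₂_cont : ContinuousOn (fun p : EuclideanSpace ℝ (Fin d) × EuclideanSpace ℝ (Fin d) =>
      ω₂ p.1 p.2) (P ×ˢ P))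
    (hω₂_unit : ∀ x ∈ P, ∀ y ∈ P, ‖ω₂ x y‖ = 1)
    (hω₂_mult : ∀ x ∈ P, ∀ y ∈ P, ∀ z ∈ P, ω₂ x y * ω₂ (x + y) z = ω₂ x (y + z) * ω₂ y z)
    (u v : EuclideanSpace ℝ (Fin d) → H →L[ℂ] H)
    (hu_cont : ∀ ξ : H, ContinuousOn (fun x => u x ξ) P)
    (hu_int : ∀ x ∈ P, ∀ T : H →L[ℂ] H, α x T ∘L u x = u x ∘L T)
    (hu_sem : ∀ x ∈ P, ∀ y ∈ P, u (x + y) = ω₁ x y • (u x ∘L u y))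
    (hu_ne : ∃ x ∈ P, u x ≠ 0)
    (hv_cont : ∀ ξ : H, ContinuousOn (fun x => v x ξ) P)
    (hv_int : ∀ x ∈ P, ∀ T : H →L[ℂ] H, α x T ∘L v x = v x ∘L T)
    (hv_sem : ∀ x ∈ P, ∀ y ∈ P, v (x + y) = ω₂ x y • (v x ∘L v y))
    (hv_ne : ∃ x ∈ P, v x ≠ 0) :
    ∃ g : EuclideanSpace ℝ (Fin d) → ℂ, ContinuousOn g P ∧ (∀ x ∈ P, ‖g x‖ = 1) ∧
      ∀ x ∈ P, ∀ y ∈ P, ω₁ x y * g x * g y * (g (x + y))⁻¹ = ω₂ x y := by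
  classical
  obtain ⟨x₀, hx₀P, hux₀⟩ := hu_ne
  obtain ⟨x₁, hx₁P, hvx₁⟩ := hv_ne
  -- a unit vector
  obtain ⟨ξ₀, hξ₀⟩ : ∃ ξ : H, u x₀ ξ ≠ 0 := by
    by_contra h
    push_neg at h
    exact hux₀ (ContinuousLinearMap.ext fun ξ => by simpa using h ξ)
  have hξ₀ne : ξ₀ ≠ 0 := fun h => hξ₀ (by simp [h])
  set e : H := ‖ξ₀‖⁻¹ • ξ₀ with he_def
  have he : ‖e‖ = 1 := by
    rw [he_def, norm_smul, norm_inv, norm_norm, inv_mul_cancel₀ (norm_ne_zero_iff.2 hξ₀ne)]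
  -- 0 ∈ P
  have h0P : (0 : EuclideanSpace ℝ (Fin d)) ∈ P := by
    simpa using hcone 0 le_rfl x₀ hx₀P
  -- P is closed under addition
  have haddP : ∀ x ∈ P, ∀ y ∈ P, x + y ∈ P := by
    intro x hx y hy
    have hm : (2:ℝ)⁻¹ • x + (2:ℝ)⁻¹ • y ∈ P := by
      have := hconv hx hy (by norm_num : (0:ℝ) ≤ (2:ℝ)⁻¹) (by norm_num : (0:ℝ) ≤ (2:ℝ)⁻¹)
        (by norm_num)
      simpa using this
    have := hcone 2 (by norm_num) _ hm
    simpa [smul_add, smul_smul] using this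
  -- the adjoint-commutation property
  have hcomm : ∀ x ∈ P, ∀ T : H →L[ℂ] H,
      ((adjoint (v x)) ∘L u x) ∘L T = T ∘L ((adjoint (v x)) ∘L u x) := by
    intro x hx T
    have h1 : u x ∘L T = α x T ∘L u x := (hu_int x hx T).symm
    have h2 : adjoint (v x) ∘L α x T = T ∘L adjoint (v x) := by
      have h3 : α x (adjoint T) ∘L v x = v x ∘L adjoint T := hv_int x hx (adjoint T)
      have h4 := congrArg ContinuousLinearMap.adjoint h3
      rw [adjoint_comp, adjoint_comp, adjoint_adjoint] at h4
      have h5 : adjoint (α x (adjoint T)) = α x T := by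
        rw [← star_eq_adjoint, ← map_star, star_eq_adjoint, adjoint_adjoint]
      rw [h5] at h4
      exact h4
    calc (adjoint (v x) ∘L u x) ∘L T = adjoint (v x) ∘L (α x T ∘L u x) := by
          rw [comp_assoc, h1]
      _ = (adjoint (v x) ∘L α x T) ∘L u x := by rw [comp_assoc]
      _ = (T ∘L adjoint (v x)) ∘L u x := by rw [h2]
      _ = T ∘L (adjoint (v x) ∘L u x) := by rw [comp_assoc]
  -- the covariance function
  set c : EuclideanSpace ℝ (Fin d) → ℂ := fun x => (inner ℂ (v x e) (u x e) : ℂ) with hc_def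
  have hscal : ∀ x ∈ P, (adjoint (v x)) ∘L u x = c x • (1 : H →L[ℂ] H) := by
    intro x hx
    have := commutant_scalar' e he _ (hcomm x hx)
    rw [this]
    congr 1
    simp [hc_def, adjoint_inner_right]
  have hkey : ∀ x ∈ P, ∀ a b : H, (inner ℂ (v x a) (u x b) : ℂ) = c x * inner ℂ a b := by
    intro x hx a b
    have : (inner ℂ (v x a) (u x b) : ℂ) = inner ℂ a ((adjoint (v x) ∘L u x) b) := by
      simp [adjoint_inner_right]
    rw [this, hscal x hx]
    simp [inner_smul_right]
  -- multiplicativity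
  have hmul : ∀ x ∈ P, ∀ y ∈ P,
      c (x + y) = (starRingEnd ℂ) (ω₂ x y) * ω₁ x y * (c x * c y) := by
    intro x hx y hy
    have : c (x + y) = (inner ℂ ((ω₂ x y • (v x ∘L v y)) e) ((ω₁ x y • (u x ∘L u y)) e) : ℂ) := by
      rw [hc_def]; simp only [← hu_sem x hx y hy, ← hv_sem x hx y hy]
    rw [this]
    simp only [smul_apply, coe_comp', Function.comp_apply, inner_smul_left, inner_smul_right]
    rw [hkey x hx, hkey y hy]
    have hee : (inner ℂ e e : ℂ) = 1 := by
      rw [inner_self_eq_norm_sq_to_K, he]; norm_num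
    rw [hee]
    ring
  -- c is continuous on P
  have hc_cont : ContinuousOn c P := by
    exact ContinuousOn.inner (hv_cont e) (hu_cont e)
  -- c 0 ≠ 0
  have hc0 : c 0 ≠ 0 := by
    have hu0 : u 0 = (inner ℂ e (u 0 e) : ℂ) • (1 : H →L[ℂ] H) := by
      apply commutant_scalar' e he
      intro T
      have := hu_int 0 h0P T
      rw [hzero] at this
      exact this.symm
    have hv0 : v 0 = (inner ℂ e (v 0 e) : ℂ) • (1 : H →L[ℂ] H) := by
      apply commutant_scalar' e he
      intro T
      have := hv_int 0 h0P T
      rw [hzero] at this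
      exact this.symm
    set lam : ℂ := (inner ℂ e (u 0 e) : ℂ)
    set kap : ℂ := (inner ℂ e (v 0 e) : ℂ)
    have hlam : lam ≠ 0 := by
      intro h
      apply hux₀
      have h0 : u 0 = 0 := by rw [hu0, h, zero_smul]
      have := hu_sem x₀ hx₀P 0 h0P
      rw [h0] at this
      simpa using this
    have hkap : kap ≠ 0 := by
      intro h
      apply hvx₁
      have h0 : v 0 = 0 := by rw [hv0, h, zero_smul]
      have := hv_sem x₁ hx₁P 0 h0P
      rw [h0] at this
      simpa using this
    have hee : (inner ℂ e e : ℂ) = 1 := by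
      rw [inner_self_eq_norm_sq_to_K, he]; norm_num
    have : c 0 = (starRingEnd ℂ) kap * lam := by
      rw [hc_def]
      simp only [hu0, hv0, smul_apply, ContinuousLinearMap.one_apply, inner_smul_left, inner_smul_right]
      rw [hee]; ring
    rw [this]
    exact mul_ne_zero (by simpa using hkap) hlam
  -- c never vanishes on P
  have hcne : ∀ x ∈ P, c x ≠ 0 := by
    intro x hx hcx
    -- halving lemma
    have hhalf : ∀ y ∈ P, c y = 0 → c ((2:ℝ)⁻¹ • y) = 0 := by
      intro y hy h0
      have hyhalf : (2:ℝ)⁻¹ • y ∈ P := hcone _ (by norm_num) y hy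
      have hsum : (2:ℝ)⁻¹ • y + (2:ℝ)⁻¹ • y = y := by
        rw [← add_smul]; norm_num
      have := hmul _ hyhalf _ hyhalf
      rw [hsum, h0] at this
      have hω₂ne : ω₂ ((2:ℝ)⁻¹ • y) ((2:ℝ)⁻¹ • y) ≠ 0 := by
        intro h
        have := hω₂_unit _ hyhalf _ hyhalf
        rw [h] at this; simp at this
      have hω₁ne : ω₁ ((2:ℝ)⁻¹ • y) ((2:ℝ)⁻¹ • y) ≠ 0 := by
        intro h
        have := hω₁_unit _ hyhalf _ hyhalf
        rw [h] at this; simp at this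
      have := this.symm
      rcases mul_eq_zero.1 this with h | h
      · rcases mul_eq_zero.1 h with h' | h'
        · exact absurd h' (by simpa using hω₂ne)
        · exact absurd h' hω₁ne
      · rcases mul_eq_zero.1 h with h' | h' <;> exact h'
    -- the sequence x/2^n
    have hseq : ∀ n : ℕ, c (((2:ℝ)⁻¹)^n • x) = 0 ∧ ((2:ℝ)⁻¹)^n • x ∈ P := by
      intro n
      induction n with
      | zero => simpa using ⟨hcx, hx⟩
      | succ n ih =>
        obtain ⟨ih1, ih2⟩ := ih
        have h1 : ((2:ℝ)⁻¹)^(n+1) • x = (2:ℝ)⁻¹ • (((2:ℝ)⁻¹)^n • x) := by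
          rw [smul_smul, pow_succ]; ring_nf
        rw [h1]
        exact ⟨hhalf _ ih2 ih1, hcone _ (by positivity) _ ih2⟩
    have htend : Filter.Tendsto (fun n : ℕ => ((2:ℝ)⁻¹)^n • x) Filter.atTop (nhds 0) := by
      have h1 : Filter.Tendsto (fun n : ℕ => ((2:ℝ)⁻¹)^n) Filter.atTop (nhds 0) := by
        apply tendsto_pow_atTop_nhds_zero_of_lt_one <;> norm_num
      have := h1.smul_const x
      simpa using this
    have htendP : Filter.Tendsto (fun n : ℕ => ((2:ℝ)⁻¹)^n • x) Filter.atTop (nhdsWithin 0 P) := by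
      apply tendsto_nhdsWithin_of_tendsto_nhds_of_eventually_within _ htend
      exact Filter.Eventually.of_forall fun n => (hseq n).2
    have hlim : Filter.Tendsto (fun n : ℕ => c (((2:ℝ)⁻¹)^n • x)) Filter.atTop (nhds (c 0)) :=
      (hc_cont 0 h0P).tendsto.comp htendP
    have hlim0 : Filter.Tendsto (fun n : ℕ => c (((2:ℝ)⁻¹)^n • x)) Filter.atTop (nhds 0) := by
      have : (fun n : ℕ => c (((2:ℝ)⁻¹)^n • x)) = fun _ => (0:ℂ) := by
        funext n; exact (hseq n).1
      rw [this]; exact tendsto_const_nhds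
    exact hc0 (tendsto_nhds_unique hlim hlim0)
  -- define g
  refine ⟨fun x => c x / (‖c x‖ : ℂ), ?_, ?_, ?_⟩
  · apply ContinuousOn.div hc_cont
    · exact Complex.continuous_ofReal.comp_continuousOn hc_cont.norm
    · intro x hx
      simpa using norm_ne_zero_iff.2 (hcne x hx)
  · intro x hx
    rw [norm_div]
    simp only [Complex.norm_real, norm_norm]
    rw [div_self (norm_ne_zero_iff.2 (hcne x hx))]
  · intro x hx y hy
    have hxy : x + y ∈ P := haddP x hx y hy
    have hcx := hcne x hx
    have hcy := hcne y hy
    have hcxy := hcne _ hxy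
    have hnx : (‖c x‖ : ℂ) ≠ 0 := by simpa using norm_ne_zero_iff.2 hcx
    have hny : (‖c y‖ : ℂ) ≠ 0 := by simpa using norm_ne_zero_iff.2 hcy
    have hnxy : (‖c (x+y)‖ : ℂ) ≠ 0 := by simpa using norm_ne_zero_iff.2 hcxy
    have hω₁u := hω₁_unit x hx y hy
    have hω₂u := hω₂_unit x hx y hy
    have hω₂ne : ω₂ x y ≠ 0 := fun h => by rw [h] at hω₂u; simp at hω₂u
    have hmulxy := hmul x hx y hy
    -- norm relation
    have hnorm : ‖c (x + y)‖ = ‖c x‖ * ‖c y‖ := by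
      rw [hmulxy]
      simp [norm_mul, RCLike.norm_conj, hω₁u, hω₂u]
    have hconj : ω₂ x y * (starRingEnd ℂ) (ω₂ x y) = 1 := by
      rw [Complex.mul_conj]
      norm_cast
      rw [Complex.normSq_eq_norm_sq]
      simp only [hω₂u]
      norm_num
    have hω₁ne : ω₁ x y ≠ 0 := fun h => by rw [h] at hω₁u; simp at hω₁u
    have hconjne : (starRingEnd ℂ) (ω₂ x y) ≠ 0 := by simpa using hω₂ne
    show ω₁ x y * (c x / (‖c x‖ : ℂ)) * (c y / (‖c y‖ : ℂ)) *
        (c (x + y) / (‖c (x + y)‖ : ℂ))⁻¹ = ω₂ x y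
    rw [hnorm, hmulxy]
    push_cast
    exact coho_alg _ _ _ _ _ _ hω₁ne hcx hcy hnx hny hconj
end

section
/- Let P = ℝ₊ × ℝ₊, a < 0 < b, and A_T = ([a,∞) × [b,∞)) ⊔ ([0,∞) × [0,b)). Then the shift semigroup {S^{A_T}_x}_{x∈P} on L²(A_T) does not satisfy the commutation relation (S^{A_T}_{(0,t)})* S^{A_T}_{(s,0)} = S^{A_T}_{(s,0)} (S^{A_T}_{(0,t)})* for all s, t ≥ 0; in particular it is not conjugate to the standard shift {S_x}_{x∈P} on L²(P), which does satisfy this relation. -/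
open MeasureTheory ContinuousLinearMap

variable {B : Set (ℝ × ℝ)} {x : ℝ × ℝ}

lemma map_le_restrict (hB : MeasurableSet B) (hxB : ∀ z ∈ B, z + x ∈ B) :
    Measure.map (· + x) ((volume : Measure (ℝ × ℝ)).restrict B)
      ≤ (volume : Measure (ℝ × ℝ)).restrict B := by
  refine Measure.le_iff.2 fun s hs => ?_
  rw [Measure.map_apply (measurable_add_const x) hs, Measure.restrict_apply hs,
    Measure.restrict_apply ((measurable_add_const x) hs)]
  calc volume ((· + x) ⁻¹' s ∩ B) ≤ volume ((· + x) ⁻¹' (s ∩ B)) := by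
        apply measure_mono
        rintro z ⟨hzs, hzB⟩
        exact ⟨hzs, hxB z hzB⟩
    _ = volume (s ∩ B) := measure_preimage_add_right _ _ _

lemma qmp_shift (hB : MeasurableSet B) (hxB : ∀ z ∈ B, z + x ∈ B) :
    Measure.QuasiMeasurePreserving (· + x) ((volume : Measure (ℝ × ℝ)).restrict B)
      ((volume : Measure (ℝ × ℝ)).restrict B) :=
  ⟨measurable_add_const x, (map_le_restrict hB hxB).absolutelyContinuous⟩

lemma memℒp_shift (hB : MeasurableSet B) (hxB : ∀ z ∈ B, z + x ∈ B)
    (f : Lp ℂ 2 ((volume : Measure (ℝ × ℝ)).restrict B)) :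
    MemLp (fun z => f (z + x)) 2 ((volume : Measure (ℝ × ℝ)).restrict B) := by
  have hm := map_le_restrict hB hxB
  have hsm : AEStronglyMeasurable (⇑f) (Measure.map (· + x) ((volume : Measure (ℝ × ℝ)).restrict B)) :=
    (Lp.aestronglyMeasurable f).mono_measure hm
  refine ⟨(Lp.aestronglyMeasurable f).comp_quasiMeasurePreserving (qmp_shift hB hxB), ?_⟩
  calc eLpNorm (fun z => f (z + x)) 2 ((volume : Measure (ℝ × ℝ)).restrict B)
      = eLpNorm (⇑f) 2 (Measure.map (· + x) ((volume : Measure (ℝ × ℝ)).restrict B)) :=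
        (eLpNorm_map_measure hsm (measurable_add_const x).aemeasurable).symm
    _ ≤ eLpNorm (⇑f) 2 ((volume : Measure (ℝ × ℝ)).restrict B) := eLpNorm_mono_measure _ hm
    _ < ⊤ := Lp.eLpNorm_lt_top f

lemma adjoint_shift (hB : MeasurableSet B) (hxB : ∀ z ∈ B, z + x ∈ B)
    (T : Lp ℂ 2 ((volume : Measure (ℝ × ℝ)).restrict B) →L[ℂ]
      Lp ℂ 2 ((volume : Measure (ℝ × ℝ)).restrict B))
    (hT : ∀ g : Lp ℂ 2 ((volume : Measure (ℝ × ℝ)).restrict B),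
      (T g : ℝ × ℝ → ℂ) =ᵐ[(volume : Measure (ℝ × ℝ)).restrict B]
        fun y => Set.indicator B (⇑g) (y - x))
    (f : Lp ℂ 2 ((volume : Measure (ℝ × ℝ)).restrict B)) :
    (ContinuousLinearMap.adjoint T f : ℝ × ℝ → ℂ)
      =ᵐ[(volume : Measure (ℝ × ℝ)).restrict B] fun z => f (z + x) := by
  have hF := memℒp_shift hB hxB f
  set F : ℝ × ℝ → ℂ := fun z => f (z + x) with hFdef
  set h := hF.toLp F with hdef
  have hhF : ⇑h =ᵐ[(volume : Measure (ℝ × ℝ)).restrict B] F := hF.coeFn_toLp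
  suffices heq : ContinuousLinearMap.adjoint T f = h by rw [heq]; exact hhF
  refine ext_inner_left ℂ fun g => ?_
  rw [adjoint_inner_right, L2.inner_def, L2.inner_def]
  set ψ : ℝ × ℝ → ℂ := fun y =>
    (starRingEnd ℂ) (Set.indicator B (⇑g) (y - x)) * Set.indicator B (⇑f) y with hψ
  have lhs_eq : ∫ y, (inner ℂ ((T g) y) (f y) : ℂ) ∂((volume : Measure (ℝ × ℝ)).restrict B)
      = ∫ y, ψ y ∂(volume : Measure (ℝ × ℝ)) := by
    have h1 : ∫ y, (inner ℂ ((T g) y) (f y) : ℂ) ∂((volume : Measure (ℝ × ℝ)).restrict B)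
        = ∫ y, (inner ℂ (Set.indicator B (⇑g) (y - x)) (f y : ℂ) : ℂ)
            ∂((volume : Measure (ℝ × ℝ)).restrict B) := by
      refine integral_congr_ae ?_
      filter_upwards [hT g] with y hy
      rw [hy]
    rw [h1, ← integral_indicator hB]
    refine integral_congr_ae (Filter.Eventually.of_forall fun y => ?_)
    by_cases hyB : y ∈ B
    · simp only [Set.indicator_of_mem hyB, RCLike.inner_apply', ψ]
    · simp only [Set.indicator_of_notMem hyB, ψ, mul_zero]
  have rhs_eq : ∫ z, (inner ℂ (g z) (h z) : ℂ) ∂((volume : Measure (ℝ × ℝ)).restrict B)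
      = ∫ z, ψ (z + x) ∂(volume : Measure (ℝ × ℝ)) := by
    have h1 : ∫ z, (inner ℂ (g z) (h z) : ℂ) ∂((volume : Measure (ℝ × ℝ)).restrict B)
        = ∫ z, (inner ℂ (g z) (F z) : ℂ) ∂((volume : Measure (ℝ × ℝ)).restrict B) := by
      refine integral_congr_ae ?_
      filter_upwards [hhF] with z hz
      rw [hz]
    rw [h1, ← integral_indicator hB]
    refine integral_congr_ae (Filter.Eventually.of_forall fun z => ?_)
    have hzx : z + x - x = z := by abel
    by_cases hzB : z ∈ B
    · simp only [Set.indicator_of_mem hzB, RCLike.inner_apply', ψ, hzx,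
        Set.indicator_of_mem (hxB z hzB), hFdef]
    · simp only [Set.indicator_of_notMem hzB, ψ, hzx, map_zero, zero_mul]
  rw [lhs_eq, rhs_eq, integral_add_right_eq_self ψ x]

set_option maxHeartbeats 1000000 in
lemma part2_commute (Q : Set (ℝ × ℝ)) (hQ : Q = Set.Ici 0 ×ˢ Set.Ici 0)
    (S' : ℝ × ℝ → (Lp ℂ 2 ((volume : Measure (ℝ × ℝ)).restrict Q) →L[ℂ]
      Lp ℂ 2 ((volume : Measure (ℝ × ℝ)).restrict Q)))
    (hS' : ∀ x : ℝ × ℝ, 0 ≤ x.1 → 0 ≤ x.2 →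
      ∀ f : Lp ℂ 2 ((volume : Measure (ℝ × ℝ)).restrict Q),
      (S' x f : ℝ × ℝ → ℂ) =ᵐ[(volume : Measure (ℝ × ℝ)).restrict Q]
        fun y => Set.indicator Q (⇑f) (y - x)) :
    ∀ s t : ℝ, 0 ≤ s → 0 ≤ t →
        ContinuousLinearMap.adjoint (S' ((0 : ℝ), t)) ∘L S' (s, (0 : ℝ))
          = S' (s, (0 : ℝ)) ∘L ContinuousLinearMap.adjoint (S' ((0 : ℝ), t)) := by
  intro s t hs ht
  have hQm : MeasurableSet Q := by rw [hQ]; exact measurableSet_Ici.prod measurableSet_Ici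
  have hx1 : ∀ z ∈ Q, z + ((0 : ℝ), t) ∈ Q := by
    rw [hQ]; rintro ⟨z1, z2⟩ ⟨h1, h2⟩
    simp only [Set.mem_prod, Set.mem_Ici, Prod.fst_add, Prod.snd_add] at *
    constructor <;> linarith
  refine ContinuousLinearMap.ext fun f => ?_
  apply Lp.ext
  simp only [ContinuousLinearMap.comp_apply]
  have hL1 := adjoint_shift hQm hx1 (S' ((0 : ℝ), t))
    (fun g => hS' ((0 : ℝ), t) le_rfl ht g) (S' (s, (0 : ℝ)) f)
  have hL2 := (qmp_shift hQm hx1).ae_eq_comp (hS' (s, (0 : ℝ)) hs le_rfl f)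
  have hR1 := hS' (s, (0 : ℝ)) hs le_rfl (ContinuousLinearMap.adjoint (S' ((0 : ℝ), t)) f)
  have hadj := adjoint_shift hQm hx1 (S' ((0 : ℝ), t))
    (fun g => hS' ((0 : ℝ), t) le_rfl ht g) f
  have hglob : Set.indicator Q (⇑(ContinuousLinearMap.adjoint (S' ((0 : ℝ), t)) f))
      =ᵐ[(volume : Measure (ℝ × ℝ))]
      Set.indicator Q (fun z => f (z + ((0 : ℝ), t))) := by
    filter_upwards [(ae_restrict_iff' hQm).1 hadj] with z hz
    by_cases hzQ : z ∈ Q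
    · rw [Set.indicator_of_mem hzQ, Set.indicator_of_mem hzQ, hz hzQ]
    · rw [Set.indicator_of_notMem hzQ, Set.indicator_of_notMem hzQ]
  have hR2 : _ =ᶠ[ae ((volume : Measure (ℝ × ℝ)).restrict Q)] _ :=
    ae_restrict_of_ae
      ((measurePreserving_sub_right (volume : Measure (ℝ × ℝ))
        (s, (0 : ℝ))).quasiMeasurePreserving.ae_eq_comp hglob)
  filter_upwards [hL1, hL2, hR1, hR2, ae_restrict_mem hQm] with z h1 h2 h3 h4 hzQ
  simp only [Function.comp_apply] at h2 h4
  rw [h1, h2, h3, h4]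
  obtain ⟨z1, z2⟩ := z
  rw [hQ] at hzQ
  obtain ⟨hz1, hz2⟩ := hzQ
  simp only [Set.mem_Ici] at hz1 hz2
  have e1 : ((z1, z2) + ((0 : ℝ), t)) - ((s : ℝ), (0 : ℝ)) = (z1 - s, z2 + t) := by
    simp [Prod.ext_iff]
  have e2 : ((z1, z2) : ℝ × ℝ) - ((s : ℝ), (0 : ℝ)) = (z1 - s, z2) := by
    simp [Prod.ext_iff]
  rw [e1, e2]
  by_cases hc : s ≤ z1
  · have m1 : ((z1 - s, z2 + t) : ℝ × ℝ) ∈ Q := by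
      rw [hQ, Set.mem_prod]; dsimp only; rw [Set.mem_Ici, Set.mem_Ici]
      constructor <;> linarith
    have m2 : ((z1 - s, z2) : ℝ × ℝ) ∈ Q := by
      rw [hQ, Set.mem_prod]; dsimp only; rw [Set.mem_Ici, Set.mem_Ici]
      constructor <;> linarith
    rw [Set.indicator_of_mem m1, Set.indicator_of_mem m2]
    norm_num
  · have m1 : ((z1 - s, z2 + t) : ℝ × ℝ) ∉ Q := by
      rw [hQ, Set.mem_prod]; dsimp only; rw [Set.mem_Ici, Set.mem_Ici]
      rintro ⟨h1', -⟩; exact hc (by linarith)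
    have m2 : ((z1 - s, z2) : ℝ × ℝ) ∉ Q := by
      rw [hQ, Set.mem_prod]; dsimp only; rw [Set.mem_Ici, Set.mem_Ici]
      rintro ⟨h1', -⟩; exact hc (by linarith)
    rw [Set.indicator_of_notMem m1, Set.indicator_of_notMem m2]

lemma part1_not (a b : ℝ) (ha : a < 0) (hb : 0 < b)
    (AT : Set (ℝ × ℝ))
    (hAT : AT = (Set.Ici a ×ˢ Set.Ici b) ∪ (Set.Ici 0 ×ˢ Set.Ico 0 b))
    (S : ℝ × ℝ → (Lp ℂ 2 ((volume : Measure (ℝ × ℝ)).restrict AT) →L[ℂ]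
      Lp ℂ 2 ((volume : Measure (ℝ × ℝ)).restrict AT)))
    (hS : ∀ x : ℝ × ℝ, 0 ≤ x.1 → 0 ≤ x.2 →
      ∀ f : Lp ℂ 2 ((volume : Measure (ℝ × ℝ)).restrict AT),
      (S x f : ℝ × ℝ → ℂ) =ᵐ[(volume : Measure (ℝ × ℝ)).restrict AT]
        fun y => Set.indicator AT (⇑f) (y - x)) :
    ¬ ∀ s t : ℝ, 0 ≤ s → 0 ≤ t →
        ContinuousLinearMap.adjoint (S ((0 : ℝ), t)) ∘L S (s, (0 : ℝ))
          = S (s, (0 : ℝ)) ∘L ContinuousLinearMap.adjoint (S ((0 : ℝ), t)) := by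
  intro hcomm
  have hATm : MeasurableSet AT := by
    rw [hAT]
    exact (measurableSet_Ici.prod measurableSet_Ici).union
      (measurableSet_Ici.prod measurableSet_Ico)
  set ε : ℝ := min (-a) b / 2 with hεdef
  have hε : 0 < ε := by
    have : 0 < min (-a) b := lt_min (by linarith) hb
    positivity
  have hεa : ε ≤ -a := by
    have h1 : min (-a) b ≤ -a := min_le_left _ _
    have h2 : 0 < min (-a) b := lt_min (by linarith) hb
    rw [hεdef]; linarith
  have hεb : ε ≤ b := by
    have h1 : min (-a) b ≤ b := min_le_right _ _
    have h2 : 0 < min (-a) b := lt_min (by linarith) hb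
    rw [hεdef]; linarith
  have hx1 : ∀ z ∈ AT, z + ((0 : ℝ), b) ∈ AT := by
    rw [hAT]; rintro ⟨z1, z2⟩ (⟨h1, h2⟩ | ⟨h1, h2⟩)
    · left
      simp only [Set.mem_Ici, Set.mem_prod, Prod.fst_add, Prod.snd_add] at *
      constructor <;> linarith
    · left
      simp only [Set.mem_Ici, Set.mem_Ico, Set.mem_prod, Prod.fst_add, Prod.snd_add] at *
      constructor <;> linarith
  -- the test function: indicator of R
  set R : Set (ℝ × ℝ) := Set.Icc a (a + ε) ×ˢ Set.Icc b (b + ε) with hRdef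
  have hRm : MeasurableSet R := measurableSet_Icc.prod measurableSet_Icc
  have hRsub : R ⊆ AT := by
    rw [hAT, hRdef]; rintro ⟨y1, y2⟩ ⟨h1, h2⟩
    simp only [Set.mem_Icc] at h1 h2
    left; exact ⟨Set.mem_Ici.2 h1.1, Set.mem_Ici.2 h2.1⟩
  have hmem : MemLp (R.indicator fun _ => (1 : ℂ)) 2
      ((volume : Measure (ℝ × ℝ)).restrict AT) := by
    refine memLp_indicator_const 2 hRm 1 (Or.inr ?_)
    refine ne_of_lt (lt_of_le_of_lt (Measure.restrict_apply_le _ _) ?_)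
    rw [hRdef, Measure.volume_eq_prod, Measure.prod_prod, Real.volume_Icc, Real.volume_Icc]
    exact ENNReal.mul_lt_top ENNReal.ofReal_lt_top ENNReal.ofReal_lt_top
  set f := hmem.toLp (R.indicator fun _ => (1 : ℂ)) with hfdef
  have hf : ⇑f =ᵐ[(volume : Measure (ℝ × ℝ)).restrict AT] R.indicator fun _ => (1 : ℂ) :=
    hmem.coeFn_toLp
  have hs : (0 : ℝ) ≤ -a := by linarith
  have happ : ContinuousLinearMap.adjoint (S ((0 : ℝ), b)) (S (-a, (0 : ℝ)) f)
      = S (-a, (0 : ℝ)) (ContinuousLinearMap.adjoint (S ((0 : ℝ), b)) f) := by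
    have := congrArg (fun T => T f) (hcomm (-a) b hs hb.le)
    simpa using this
  have hae : ⇑(ContinuousLinearMap.adjoint (S ((0 : ℝ), b)) (S (-a, (0 : ℝ)) f))
      = ⇑(S (-a, (0 : ℝ)) (ContinuousLinearMap.adjoint (S ((0 : ℝ), b)) f)) := by
    rw [happ]
  have hL1 := adjoint_shift hATm hx1 (S ((0 : ℝ), b))
    (fun g => hS ((0 : ℝ), b) le_rfl hb.le g) (S (-a, (0 : ℝ)) f)
  have hL2 := (qmp_shift hATm hx1).ae_eq_comp (hS (-a, (0 : ℝ)) hs le_rfl f)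
  have hR1 := hS (-a, (0 : ℝ)) hs le_rfl (ContinuousLinearMap.adjoint (S ((0 : ℝ), b)) f)
  have hglobf : Set.indicator AT (⇑f) =ᵐ[(volume : Measure (ℝ × ℝ))]
      R.indicator fun _ => (1 : ℂ) := by
    filter_upwards [(ae_restrict_iff' hATm).1 hf] with y hy
    by_cases hyA : y ∈ AT
    · rw [Set.indicator_of_mem hyA, hy hyA]
    · rw [Set.indicator_of_notMem hyA,
        Set.indicator_of_notMem (fun hyR => hyA (hRsub hyR))]
  set Z : Set (ℝ × ℝ) := Set.Ioo (0 : ℝ) ε ×ˢ Set.Ioo (0 : ℝ) ε with hZdef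
  have hZm : MeasurableSet Z := measurableSet_Ioo.prod measurableSet_Ioo
  have hZsub : Z ⊆ AT := by
    rw [hAT, hZdef]; rintro ⟨z1, z2⟩ ⟨h1, h2⟩
    simp only [Set.mem_Ioo] at h1 h2
    right
    exact ⟨Set.mem_Ici.2 h1.1.le, Set.mem_Ico.2 ⟨h2.1.le, by linarith [h2.2]⟩⟩
  have hrmono : (volume : Measure (ℝ × ℝ)).restrict Z
      ≤ (volume : Measure (ℝ × ℝ)).restrict AT := Measure.restrict_mono hZsub le_rfl
  have h5 := ae_restrict_of_ae (s := Z)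
    ((measurePreserving_add_right (volume : Measure (ℝ × ℝ))
      ((a : ℝ), b)).quasiMeasurePreserving.ae_eq_comp hglobf)
  have key : ∀ᵐ z ∂((volume : Measure (ℝ × ℝ)).restrict Z), (1 : ℂ) = 0 := by
    filter_upwards [ae_mono hrmono hL1, ae_mono hrmono hL2, ae_mono hrmono hR1, h5,
      ae_restrict_mem hZm] with z h1 h2 h3 h4 hzZ
    simp only [Function.comp_apply] at h2 h4
    obtain ⟨z1, z2⟩ := z
    rw [hZdef] at hzZ
    obtain ⟨hz1, hz2⟩ := hzZ
    simp only [Set.mem_Ioo] at hz1 hz2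
    have e1 : ((z1, z2) : ℝ × ℝ) + ((0 : ℝ), b) - (-a, (0 : ℝ)) = (z1, z2) + ((a : ℝ), b) := by
      simp [Prod.ext_iff]
    have e2 : ((z1, z2) : ℝ × ℝ) - (-a, (0 : ℝ)) = (z1 + a, z2) := by
      simp [Prod.ext_iff]
    have e3 : ((z1, z2) : ℝ × ℝ) + ((a : ℝ), b) = (z1 + a, z2 + b) := by
      simp [Prod.ext_iff]
    have mR : ((z1 + a, z2 + b) : ℝ × ℝ) ∈ R := by
      rw [hRdef, Set.mem_prod]; dsimp only
      rw [Set.mem_Icc, Set.mem_Icc]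
      constructor <;> constructor <;> linarith [hz1.1, hz1.2, hz2.1, hz2.2]
    have mAT : ((z1 + a, z2) : ℝ × ℝ) ∉ AT := by
      rw [hAT]; rintro (⟨h1', h2'⟩ | ⟨h1', h2'⟩)
      · simp only [Set.mem_Ici] at h2'; linarith [hz2.2]
      · simp only [Set.mem_Ici] at h1'; linarith [hz1.2]
    have lhs1 : (ContinuousLinearMap.adjoint (S ((0 : ℝ), b)) (S (-a, (0 : ℝ)) f)) (z1, z2)
        = (1 : ℂ) := by
      rw [h1, h2, e1, h4, e3, Set.indicator_of_mem mR]
    have rhs0 : (S (-a, (0 : ℝ)) (ContinuousLinearMap.adjoint (S ((0 : ℝ), b)) f)) (z1, z2)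
        = 0 := by
      rw [h3, e2, Set.indicator_of_notMem mAT]
    rw [← lhs1, ← rhs0, hae]
  have hZ0 : (volume : Measure (ℝ × ℝ)).restrict Z Set.univ = 0 := by
    have := ae_iff.1 key
    simpa [one_ne_zero] using this
  rw [Measure.restrict_apply_univ] at hZ0
  rw [hZdef, Measure.volume_eq_prod, Measure.prod_prod, Real.volume_Ioo] at hZ0
  simp only [mul_eq_zero, sub_zero, ENNReal.ofReal_eq_zero] at hZ0
  rcases hZ0 with h | h <;> linarith

/-- For `P = ℝ₊ × ℝ₊`, `a < 0 < b` and
`A_T = ([a,∞) × [b,∞)) ⊔ ([0,∞) × [0,b))`, the shift semigroup on `L²(A_T)` does not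
satisfy the commutation relation `S_{(0,t)}^* S_{(s,0)} = S_{(s,0)} S_{(0,t)}^*`, while the
standard shift on `L²(P)` does; consequently the two isometric representations are not
conjugate. -/
theorem shift_AT_not_conjugate_standard (a b : ℝ) (ha : a < 0) (hb : 0 < b)
    (AT : Set (ℝ × ℝ))
    (hAT : AT = (Set.Ici a ×ˢ Set.Ici b) ∪ (Set.Ici 0 ×ˢ Set.Ico 0 b))
    (S : ℝ × ℝ → (Lp ℂ 2 ((volume : Measure (ℝ × ℝ)).restrict AT) →L[ℂ]
      Lp ℂ 2 ((volume : Measure (ℝ × ℝ)).restrict AT)))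
    (hS : ∀ x : ℝ × ℝ, 0 ≤ x.1 → 0 ≤ x.2 →
      ∀ f : Lp ℂ 2 ((volume : Measure (ℝ × ℝ)).restrict AT),
      (S x f : ℝ × ℝ → ℂ) =ᵐ[(volume : Measure (ℝ × ℝ)).restrict AT]
        fun y => Set.indicator AT (⇑f) (y - x))
    (Q : Set (ℝ × ℝ)) (hQ : Q = Set.Ici 0 ×ˢ Set.Ici 0)
    (S' : ℝ × ℝ → (Lp ℂ 2 ((volume : Measure (ℝ × ℝ)).restrict Q) →L[ℂ]
      Lp ℂ 2 ((volume : Measure (ℝ × ℝ)).restrict Q)))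
    (hS' : ∀ x : ℝ × ℝ, 0 ≤ x.1 → 0 ≤ x.2 →
      ∀ f : Lp ℂ 2 ((volume : Measure (ℝ × ℝ)).restrict Q),
      (S' x f : ℝ × ℝ → ℂ) =ᵐ[(volume : Measure (ℝ × ℝ)).restrict Q]
        fun y => Set.indicator Q (⇑f) (y - x)) :
    (¬ ∀ s t : ℝ, 0 ≤ s → 0 ≤ t →
        ContinuousLinearMap.adjoint (S ((0 : ℝ), t)) ∘L S (s, (0 : ℝ))
          = S (s, (0 : ℝ)) ∘L ContinuousLinearMap.adjoint (S ((0 : ℝ), t))) ∧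
    (∀ s t : ℝ, 0 ≤ s → 0 ≤ t →
        ContinuousLinearMap.adjoint (S' ((0 : ℝ), t)) ∘L S' (s, (0 : ℝ))
          = S' (s, (0 : ℝ)) ∘L ContinuousLinearMap.adjoint (S' ((0 : ℝ), t))) ∧
    ¬ ∃ U : Lp ℂ 2 ((volume : Measure (ℝ × ℝ)).restrict AT) ≃ₗᵢ[ℂ]
          Lp ℂ 2 ((volume : Measure (ℝ × ℝ)).restrict Q),
        ∀ x : ℝ × ℝ, 0 ≤ x.1 → 0 ≤ x.2 → ∀ f, U (S x f) = S' x (U f) := by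
  refine ⟨part1_not a b ha hb AT hAT S hS, part2_commute Q hQ S' hS', ?_⟩
  rintro ⟨U, hU⟩
  apply part1_not a b ha hb AT hAT S hS
  intro s t hs ht
  have hadj_int : ∀ x : ℝ × ℝ, 0 ≤ x.1 → 0 ≤ x.2 → ∀ f,
      U (ContinuousLinearMap.adjoint (S x) f) = ContinuousLinearMap.adjoint (S' x) (U f) := by
    intro x hx1 hx2 f
    refine ext_inner_left ℂ fun v => ?_
    rw [ContinuousLinearMap.adjoint_inner_right]
    conv_lhs => rw [← U.apply_symm_apply v]
    rw [LinearIsometryEquiv.inner_map_map, ContinuousLinearMap.adjoint_inner_right,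
      ← LinearIsometryEquiv.inner_map_map U, hU x hx1 hx2, U.apply_symm_apply]
  refine ContinuousLinearMap.ext fun f => ?_
  simp only [ContinuousLinearMap.comp_apply]
  apply U.injective
  rw [hadj_int ((0 : ℝ), t) le_rfl ht _, hU (s, (0 : ℝ)) hs le_rfl _,
    hU (s, (0 : ℝ)) hs le_rfl _, hadj_int ((0 : ℝ), t) le_rfl ht _]
  have := congrArg (fun T => T (U f)) (part2_commute Q hQ S' hS' s t hs ht)
  simpa using this
end

section
/- Let α be an E₀-semigroup over P on B(H) in standard form with invariant unit vector Ω (⟨Ω, α_x(X)Ω⟩ = ⟨Ω, XΩ⟩ for all x, X). Then the formula T_x(XΩ) := α_x(X)Ω for X ∈ B(H) yields a well-defined isometry T_x on H for each x ∈ P, and {T_x}_{x∈P} is a unit for α: α_x(X)T_x = T_x X and T_{x+y} = T_x T_y. -/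
open ContinuousLinearMap

/-- For an E₀-semigroup `α` in standard form with invariant unit vector `Ω`, the formula
`T_x (X Ω) = α_x(X) Ω` yields a well-defined family of isometries which is a unit:
`α_x(X) T_x = T_x X` and `T_{x+y} = T_x T_y`. -/
theorem standard_form_canonical_unit {d : ℕ}
    {H : Type*} [NormedAddCommGroup H] [InnerProductSpace ℂ H] [CompleteSpace H]
    (P : Set (EuclideanSpace ℝ (Fin d)))
    (hclosed : IsClosed P) (hconv : Convex ℝ P)
    (hcone : ∀ (c : ℝ), 0 ≤ c → ∀ x ∈ P, c • x ∈ P)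
    (hspan : ∀ x : EuclideanSpace ℝ (Fin d), ∃ a ∈ P, ∃ b ∈ P, x = a - b)
    (hpointed : P ∩ (-P) = {0})
    (α : EuclideanSpace ℝ (Fin d) → (H →L[ℂ] H) →⋆ₐ[ℂ] (H →L[ℂ] H))
    (hsem : ∀ x ∈ P, ∀ y ∈ P, ∀ A : H →L[ℂ] H, α x (α y A) = α (x + y) A)
    (hzero : ∀ A : H →L[ℂ] H, α 0 A = A)
    (hweak : ∀ (A : H →L[ℂ] H) (ξ η : H),
      ContinuousOn (fun x => (inner ℂ (α x A ξ) η : ℂ)) P)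
    (Ω : H) (hΩ : ‖Ω‖ = 1)
    (hinv : ∀ x ∈ P, ∀ X : H →L[ℂ] H, (inner ℂ Ω (α x X Ω) : ℂ) = inner ℂ Ω (X Ω)) :
    ∃ T : EuclideanSpace ℝ (Fin d) → H →L[ℂ] H,
      (∀ x ∈ P, ∀ ξ : H, ‖T x ξ‖ = ‖ξ‖) ∧
      (∀ x ∈ P, ∀ X : H →L[ℂ] H, T x (X Ω) = α x X Ω) ∧
      (∀ x ∈ P, ∀ X : H →L[ℂ] H, α x X ∘L T x = T x ∘L X) ∧
      (∀ x ∈ P, ∀ y ∈ P, T (x + y) = T x ∘L T y) := by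
  classical
  have hΩΩ : (inner ℂ Ω Ω : ℂ) = 1 := by
    rw [inner_self_eq_norm_sq_to_K, hΩ]; norm_num
  -- rank-one operator R ξ : η ↦ ⟨Ω, η⟩ • ξ, with R ξ Ω = ξ
  set R : H → (H →L[ℂ] H) := fun ξ => (innerSL ℂ Ω).smulRight ξ with hR
  have hRΩ : ∀ ξ, R ξ Ω = ξ := by
    intro ξ
    simp [hR, hΩΩ, hΩ]
  -- the isometry property of α x on vectors X Ω
  have hiso : ∀ x ∈ P, ∀ X : H →L[ℂ] H, ‖α x X Ω‖ = ‖X Ω‖ := by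
    intro x hx X
    have h1 : (inner ℂ (α x X Ω) (α x X Ω) : ℂ) = inner ℂ Ω ((star (α x X) * α x X) Ω) := by
      rw [ContinuousLinearMap.mul_apply, star_eq_adjoint, adjoint_inner_right]
    have h2 : star (α x X) * α x X = α x (star X * X) := by
      rw [map_mul, map_star]
    have h3 : (inner ℂ Ω ((star X * X) Ω) : ℂ) = inner ℂ (X Ω) (X Ω) := by
      rw [ContinuousLinearMap.mul_apply, star_eq_adjoint, adjoint_inner_right]
    have h4 : (inner ℂ (α x X Ω) (α x X Ω) : ℂ) = inner ℂ (X Ω) (X Ω) := by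
      rw [h1, h2, hinv x hx, h3]
    rw [norm_eq_sqrt_re_inner (𝕜 := ℂ), norm_eq_sqrt_re_inner (𝕜 := ℂ), h4]
  -- same values at Ω give same images
  have hsame : ∀ x ∈ P, ∀ A B : H →L[ℂ] H, A Ω = B Ω → α x A Ω = α x B Ω := by
    intro x hx A B hAB
    have : ‖α x A Ω - α x B Ω‖ = 0 := by
      have h : α x A Ω - α x B Ω = α x (A - B) Ω := by
        rw [map_sub, sub_apply]
      rw [h, hiso x hx, sub_apply, hAB, sub_self, norm_zero]
    exact sub_eq_zero.mp (norm_eq_zero.mp this)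
  -- construct T x for x ∈ P
  have key : ∀ x, x ∈ P → ∃ T : H →L[ℂ] H,
      (∀ ξ, T ξ = α x (R ξ) Ω) := by
    intro x hx
    let L : H →ₗ[ℂ] H :=
      { toFun := fun ξ => α x (R ξ) Ω
        map_add' := by
          intro ξ η
          have h : R (ξ + η) = R ξ + R η := by
            ext v
            simp only [hR, smulRight_apply, add_apply, smul_add]
          show α x (R (ξ + η)) Ω = α x (R ξ) Ω + α x (R η) Ω
          rw [h, map_add, add_apply]
        map_smul' := by
          intro c ξ
          have h : R (c • ξ) = c • R ξ := by
            ext v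
            simp only [hR, smulRight_apply, smul_apply]
            rw [smul_comm]
          show α x (R (c • ξ)) Ω = c • α x (R ξ) Ω
          rw [h, map_smul, smul_apply] }
    have hLnorm : ∀ ξ, ‖L ξ‖ = ‖ξ‖ := by
      intro ξ
      show ‖α x (R ξ) Ω‖ = ‖ξ‖
      rw [hiso x hx, hRΩ]
    exact ⟨L.mkContinuous 1 (fun ξ => by rw [hLnorm, one_mul]), fun ξ => rfl⟩
  set T : EuclideanSpace ℝ (Fin d) → H →L[ℂ] H :=
    fun x => if hx : x ∈ P then (key x hx).choose else 0 with hT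
  have hTval : ∀ x (hx : x ∈ P), ∀ ξ, T x ξ = α x (R ξ) Ω := by
    intro x hx ξ
    simp only [hT, dif_pos hx]
    exact (key x hx).choose_spec ξ
  have hext : ∀ x ∈ P, ∀ X : H →L[ℂ] H, T x (X Ω) = α x X Ω := by
    intro x hx X
    rw [hTval x hx]
    exact hsame x hx _ _ (hRΩ _)
  have hadd : ∀ x ∈ P, ∀ y ∈ P, x + y ∈ P := by
    intro x hx y hy
    have hmid : (1/2 : ℝ) • x + (1/2 : ℝ) • y ∈ P :=
      hconv hx hy (by norm_num) (by norm_num) (by norm_num)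
    have h2 := hcone 2 (by norm_num) _ hmid
    have : (2 : ℝ) • ((1/2 : ℝ) • x + (1/2 : ℝ) • y) = x + y := by
      rw [smul_add, smul_smul, smul_smul]
      norm_num
    rwa [this] at h2
  refine ⟨T, ?_, hext, ?_, ?_⟩
  · intro x hx ξ
    rw [hTval x hx, hiso x hx, hRΩ]
  · intro x hx X
    ext ξ
    simp only [comp_apply]
    rw [hTval x hx ξ, hTval x hx (X ξ)]
    have h1 : α x X (α x (R ξ) Ω) = α x (X * R ξ) Ω := by
      rw [map_mul, ContinuousLinearMap.mul_apply]
    rw [h1]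
    refine hsame x hx _ _ ?_
    rw [ContinuousLinearMap.mul_apply, hRΩ, hRΩ]
  · intro x hx y hy
    ext ξ
    simp only [comp_apply]
    rw [hTval _ (hadd x hx y hy) ξ, hTval y hy ξ, hTval x hx]
    rw [← hsem x hx y hy]
    exact (hsame x hx _ _ (hRΩ _)).symm
end

section
/- Let P = ℝ₊^d with d ≥ 2 and A = ∏_{i=1}^d ℝ_i where each ℝ_i ∈ {ℝ, ℝ₊} and at least one ℝ_{i₀} = ℝ₊. Then the shift semigroup {S^A_x}_{x∈P} on L²(A, k) admits no nonzero P-additive cocycle: if h : P → L²(A,k) is continuous with (S^A_x)* h_x = 0 and h_{x+y} = h_x + S^A_x h_y for all x, y ∈ P, then h ≡ 0. -/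
open MeasureTheory ContinuousLinearMap
open scoped ENNReal NNReal

section Aux

variable {d : ℕ} {k : Type*} [NormedAddCommGroup k] [InnerProductSpace ℂ k] [CompleteSpace k]
variable {A : Set (EuclideanSpace ℝ (Fin d))}

local notation "E'" => EuclideanSpace ℝ (Fin d)
local notation "⟪" x ", " y "⟫" => @inner ℂ _ _ x y

/-- a.e. statements transfer along translations. -/
lemma aux_ae_shift {p : EuclideanSpace ℝ (Fin d) → Prop} (c : EuclideanSpace ℝ (Fin d))
    (h : ∀ᵐ y ∂(volume : Measure E'), p y) :
    ∀ᵐ y ∂(volume : Measure E'), p (y - c) := by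
  rw [ae_iff] at h ⊢
  exact ((measurePreserving_sub_right (volume : Measure E') c).quasiMeasurePreserving).preimage_null h

lemma aux_base (hAm : MeasurableSet A) (f u : Lp k 2 (volume.restrict A)) :
    ⟪f, u⟫ = ∫ y, ⟪A.indicator (⇑f) y, A.indicator (⇑u) y⟫ ∂(volume : Measure E') := by
  rw [L2.inner_def, ← integral_indicator hAm]
  congr 1
  funext y
  by_cases hy : y ∈ A
  · simp [Set.indicator_of_mem hy]
  · simp [Set.indicator_of_notMem hy]

lemma aux_repl (hAm : MeasurableSet A) (x : EuclideanSpace ℝ (Fin d))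
    (f g u : Lp k 2 (volume.restrict A))
    (hg : ⇑g =ᵐ[volume.restrict A] fun y => A.indicator (⇑f) (y - x)) :
    ⟪g, u⟫ = ∫ y, ⟪A.indicator (⇑f) (y - x), A.indicator (⇑u) y⟫ ∂(volume : Measure E') := by
  rw [aux_base hAm]
  apply integral_congr_ae
  have hg' : ∀ᵐ y ∂(volume : Measure E'), y ∈ A → g y = A.indicator (⇑f) (y - x) :=
    (ae_restrict_iff' hAm).mp hg
  filter_upwards [hg'] with y hy
  by_cases hyA : y ∈ A
  · rw [Set.indicator_of_mem hyA, Set.indicator_of_mem hyA, hy hyA]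
  · rw [Set.indicator_of_notMem hyA, Set.indicator_of_notMem hyA]
    simp

lemma aux_isom (hAm : MeasurableSet A) (x : EuclideanSpace ℝ (Fin d))
    (hxA : ∀ z ∈ A, z + x ∈ A) (f u gf gu : Lp k 2 (volume.restrict A))
    (hgf : ⇑gf =ᵐ[volume.restrict A] fun y => A.indicator (⇑f) (y - x))
    (hgu : ⇑gu =ᵐ[volume.restrict A] fun y => A.indicator (⇑u) (y - x)) :
    ⟪gf, gu⟫ = ⟪f, u⟫ := by
  rw [aux_repl hAm x f gf gu hgf, aux_base hAm f u,
    ← integral_sub_right_eq_self (fun z => ⟪A.indicator (⇑f) z, A.indicator (⇑u) z⟫) x]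
  apply integral_congr_ae
  have hgu' : ∀ᵐ y ∂(volume : Measure E'), y ∈ A → gu y = A.indicator (⇑u) (y - x) :=
    (ae_restrict_iff' hAm).mp hgu
  filter_upwards [hgu'] with y hy
  by_cases hyA : y ∈ A
  · rw [Set.indicator_of_mem hyA, hy hyA]
  · rw [Set.indicator_of_notMem hyA]
    by_cases hyxA : y - x ∈ A
    · exact absurd (by simpa using hxA _ hyxA) hyA
    · simp [Set.indicator_of_notMem hyxA]

lemma aux_fin (hAm : MeasurableSet A) (g : Lp k 2 (volume.restrict A)) :
    ∫⁻ z, (‖A.indicator (⇑g) z‖₊ : ℝ≥0∞) ^ (2:ℕ) ∂(volume : Measure E') < ⊤ := by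
  have h2 : ∫⁻ z, (‖A.indicator (⇑g) z‖₊ : ℝ≥0∞) ^ (2:ℕ) ∂(volume : Measure E')
      = ∫⁻ z, (‖(⇑g) z‖₊ : ℝ≥0∞) ^ (2:ℕ) ∂(volume.restrict A) := by
    rw [← lintegral_indicator hAm]
    congr 1
    funext z
    by_cases hz : z ∈ A
    · simp [Set.indicator_of_mem hz]
    · simp [Set.indicator_of_notMem hz]
  rw [h2]
  have h3 := (Lp.memLp g).2
  rw [eLpNorm_eq_lintegral_rpow_enorm_toReal two_ne_zero ENNReal.ofNat_ne_top] at h3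
  rw [ENNReal.rpow_lt_top_iff_of_pos (by norm_num)] at h3
  have h4 : ∀ z, (‖(⇑g) z‖₊ : ℝ≥0∞) ^ ((2:ℝ≥0∞).toReal) = (‖(⇑g) z‖₊ : ℝ≥0∞) ^ (2:ℕ) := by
    intro z
    rw [ENNReal.toReal_ofNat, ← ENNReal.rpow_natCast]
    norm_num
  simpa [h4, enorm_eq_nnnorm] using h3

lemma aux_memLp (hAm : MeasurableSet A) (t : EuclideanSpace ℝ (Fin d))
    (g : Lp k 2 (volume.restrict A)) :
    MemLp (fun z => A.indicator (⇑g) (z + t)) 2 (volume.restrict A) := by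
  constructor
  · exact (((Lp.stronglyMeasurable g).indicator hAm).comp_measurable
      (measurable_add_const t)).aestronglyMeasurable
  · rw [eLpNorm_eq_lintegral_rpow_enorm_toReal two_ne_zero ENNReal.ofNat_ne_top]
    rw [ENNReal.rpow_lt_top_iff_of_pos (by norm_num)]
    have h4 : ∀ z : E', (‖A.indicator (⇑g) (z + t)‖₊ : ℝ≥0∞) ^ ((2:ℝ≥0∞).toReal)
        = (‖A.indicator (⇑g) (z + t)‖₊ : ℝ≥0∞) ^ (2:ℕ) := by
      intro z
      rw [ENNReal.toReal_ofNat, ← ENNReal.rpow_natCast]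
      norm_num
    calc ∫⁻ z, (‖A.indicator (⇑g) (z + t)‖₊ : ℝ≥0∞) ^ ((2:ℝ≥0∞).toReal) ∂(volume.restrict A)
        = ∫⁻ z, (‖A.indicator (⇑g) (z + t)‖₊ : ℝ≥0∞) ^ (2:ℕ) ∂(volume.restrict A) := by
          simp only [h4]
      _ ≤ ∫⁻ z, (‖A.indicator (⇑g) (z + t)‖₊ : ℝ≥0∞) ^ (2:ℕ) ∂(volume : Measure E') :=
          setLIntegral_le_lintegral _ _
      _ = ∫⁻ z, (‖A.indicator (⇑g) z‖₊ : ℝ≥0∞) ^ (2:ℕ) ∂(volume : Measure E') :=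
          lintegral_add_right_eq_self (fun z => (‖A.indicator (⇑g) z‖₊ : ℝ≥0∞) ^ (2:ℕ)) t
      _ < ⊤ := aux_fin hAm g


lemma aux_hvan (hAm : MeasurableSet A) (t : EuclideanSpace ℝ (Fin d))
    (VV : Lp k 2 (volume.restrict A) → Lp k 2 (volume.restrict A))
    (hVV : ∀ w, ⇑(VV w) =ᵐ[volume.restrict A] fun y => A.indicator (⇑w) (y - t))
    (g : Lp k 2 (volume.restrict A)) (hg0 : ∀ w, ⟪VV w, g⟫ = 0) :
    ∀ᵐ z ∂(volume : Measure E'), z ∈ A → A.indicator (⇑g) (z + t) = 0 := by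
  set gT : Lp k 2 (volume.restrict A) := (aux_memLp hAm t g).toLp _ with hgTdef
  have hcoe : ⇑gT =ᵐ[volume.restrict A] fun z => A.indicator (⇑g) (z + t) :=
    MemLp.coeFn_toLp _
  have hfull : ∀ᵐ z ∂(volume : Measure E'),
      A.indicator (⇑gT) z = A.indicator (fun w => A.indicator (⇑g) (w + t)) z := by
    filter_upwards [(ae_restrict_iff' hAm).mp hcoe] with z hz
    by_cases hzA : z ∈ A
    · rw [Set.indicator_of_mem hzA, Set.indicator_of_mem hzA, hz hzA]
    · rw [Set.indicator_of_notMem hzA, Set.indicator_of_notMem hzA]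
  have h1 : ⟪VV gT, g⟫
      = ∫ y, ⟪A.indicator (⇑gT) (y - t), A.indicator (⇑g) y⟫ ∂(volume : Measure E') :=
    aux_repl hAm t gT (VV gT) g (hVV gT)
  have h2 : ⟪gT, gT⟫
      = ∫ y, ⟪A.indicator (⇑gT) (y - t), A.indicator (⇑gT) (y - t)⟫ ∂(volume : Measure E') := by
    rw [aux_base hAm]
    exact (integral_sub_right_eq_self
      (fun z => ⟪A.indicator (⇑gT) z, A.indicator (⇑gT) z⟫) t).symm
  have h3 : (∫ y, ⟪A.indicator (⇑gT) (y - t), A.indicator (⇑g) y⟫ ∂(volume : Measure E'))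
      = ∫ y, ⟪A.indicator (⇑gT) (y - t), A.indicator (⇑gT) (y - t)⟫ ∂(volume : Measure E') := by
    apply integral_congr_ae
    filter_upwards [aux_ae_shift t hfull] with y hy
    rw [hy]
    by_cases h4 : y - t ∈ A
    · rw [Set.indicator_of_mem h4, sub_add_cancel]
    · rw [Set.indicator_of_notMem h4]
      simp
  have h5 : ⟪gT, gT⟫ = (0 : ℂ) := by rw [h2, ← h3, ← h1, hg0]
  have hgT0 : gT = 0 := inner_self_eq_zero.mp h5
  have h6 : ⇑gT =ᵐ[volume.restrict A] 0 := by
    rw [hgT0]; exact Lp.coeFn_zero _ _ _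
  have h7 : (fun z => A.indicator (⇑g) (z + t)) =ᵐ[volume.restrict A] 0 := hcoe.symm.trans h6
  have h8 : ∀ᵐ z ∂(volume.restrict A), A.indicator (⇑g) (z + t) = 0 := h7
  exact (ae_restrict_iff' hAm).mp h8

lemma aux_orth (hAm : MeasurableSet A) (x t : EuclideanSpace ℝ (Fin d))
    (himp : ∀ y : EuclideanSpace ℝ (Fin d), y - x ∈ A → y - t ∈ A → y - x - t ∈ A)
    (g u gx gu : Lp k 2 (volume.restrict A))
    (hgx : ⇑gx =ᵐ[volume.restrict A] fun y => A.indicator (⇑g) (y - x))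
    (hgu : ⇑gu =ᵐ[volume.restrict A] fun y => A.indicator (⇑u) (y - t))
    (hgv : ∀ᵐ z ∂(volume : Measure E'), z ∈ A → A.indicator (⇑g) (z + t) = 0) :
    ⟪gx, gu⟫ = 0 := by
  rw [aux_repl hAm x g gx gu hgx, ← integral_zero (E' ) ℂ]
  apply integral_congr_ae
  have hgu' : ∀ᵐ y ∂(volume : Measure E'), y ∈ A → gu y = A.indicator (⇑u) (y - t) :=
    (ae_restrict_iff' hAm).mp hgu
  have hgv' : ∀ᵐ y ∂(volume : Measure E'),
      (y - (x + t)) ∈ A → A.indicator (⇑g) ((y - (x + t)) + t) = 0 := aux_ae_shift (x + t) hgv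
  filter_upwards [hgu', hgv'] with y h1 h2
  by_cases hyA : y ∈ A
  · rw [Set.indicator_of_mem hyA, h1 hyA]
    by_cases h3 : y - x ∈ A
    · by_cases h4 : y - t ∈ A
      · have h5 : y - (x + t) ∈ A := by rw [sub_add_eq_sub_sub]; exact himp y h3 h4
        have h6 := h2 h5
        rw [sub_add_eq_sub_sub, sub_add_cancel] at h6
        rw [h6, inner_zero_left]
      · rw [Set.indicator_of_notMem h4, inner_zero_right]
    · rw [Set.indicator_of_notMem h3, inner_zero_left]
  · rw [Set.indicator_of_notMem hyA, inner_zero_right]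
lemma aux_slab (hAm : MeasurableSet A) (j : Fin d) (g : Lp k 2 (volume.restrict A))
    (hinv : ∀ t' : ℝ, 0 ≤ t' →
      A.indicator (⇑g) =ᵐ[(volume : Measure E')]
        fun y => A.indicator (⇑g) (y - EuclideanSpace.single j t')) :
    g = 0 := by
  set G : E' → k := A.indicator (⇑g) with hGdef
  set N : E' → ℝ≥0∞ := fun z => (‖G z‖₊ : ℝ≥0∞) ^ (2:ℕ) with hNdef
  have hNm : Measurable N :=
    (((Lp.stronglyMeasurable g).indicator hAm).enorm).pow_const _
  set Sl : ℝ → Set E' := fun a => {z : E' | z j ∈ Set.Ico a (a+1)} with hSldef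
  have hSlm : ∀ a, MeasurableSet (Sl a) :=
    fun a => (EuclideanSpace.proj (𝕜 := ℝ) j).continuous.measurable measurableSet_Ico
  set m : ℝ → ℝ≥0∞ := fun a => ∫⁻ z in Sl a, N z ∂(volume : Measure E') with hmdef
  have hshift : ∀ (a t' : ℝ), 0 ≤ t' → m (a + t') = m a := by
    intro a t' ht'
    have hN : ∀ᵐ z ∂(volume : Measure E'), N z = N (z - EuclideanSpace.single j t') := by
      filter_upwards [hinv t' ht'] with z hz
      exact congrArg (fun v => ((‖v‖₊ : ℝ≥0∞)) ^ (2:ℕ)) hz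
    calc m (a + t') = ∫⁻ z in Sl (a + t'), N (z - EuclideanSpace.single j t') ∂volume :=
          lintegral_congr_ae (ae_restrict_of_ae hN)
      _ = ∫⁻ z, (Sl (a + t')).indicator (fun z => N (z - EuclideanSpace.single j t')) z ∂volume :=
          (lintegral_indicator (hSlm _) _).symm
      _ = ∫⁻ z, (Sl (a + t')).indicator (fun z => N (z - EuclideanSpace.single j t'))
            (z + EuclideanSpace.single j t') ∂volume :=
          (lintegral_add_right_eq_self _ _).symm
      _ = ∫⁻ z, (Sl a).indicator N z ∂volume := by
          congr 1
          funext z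
          have hmem : (z + EuclideanSpace.single j t') ∈ Sl (a + t') ↔ z ∈ Sl a := by
            have hzz : (z + EuclideanSpace.single j t') j = z j + t' := by
              simp [EuclideanSpace.single_apply]
            simp only [Sl, Set.mem_setOf_eq, Set.mem_Ico, hzz]
            constructor
            · rintro ⟨h1, h2⟩; constructor <;> linarith
            · rintro ⟨h1, h2⟩; constructor <;> linarith
          by_cases hz : z ∈ Sl a
          · rw [Set.indicator_of_mem (hmem.mpr hz), Set.indicator_of_mem hz, add_sub_cancel_right]
          · rw [Set.indicator_of_notMem (fun hc => hz (hmem.mp hc)), Set.indicator_of_notMem hz]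
      _ = m a := lintegral_indicator (hSlm a) N
  have hconst : ∀ a : ℝ, m a = m 0 := by
    intro a
    rcases le_or_gt 0 a with ha | ha
    · have := hshift 0 a ha; rw [zero_add] at this; exact this
    · have := hshift a (-a) (by linarith); rw [add_neg_cancel] at this; exact this.symm
  have htot : ∫⁻ z, N z ∂(volume : Measure E') < ⊤ := aux_fin hAm g
  have hdisj : Pairwise (Function.onFun Disjoint fun n : ℕ => Sl (n : ℝ)) := by
    intro n1 n2 hne
    simp only [Function.onFun, Set.disjoint_left]
    intro z hz1 hz2
    simp only [Sl, Set.mem_setOf_eq, Set.mem_Ico] at hz1 hz2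
    have : n1 = n2 := by
      have c1 : (n1 : ℝ) < n2 + 1 := lt_of_le_of_lt hz1.1 hz2.2
      have c2 : (n2 : ℝ) < n1 + 1 := lt_of_le_of_lt hz2.1 hz1.2
      have c1' : n1 < n2 + 1 := by exact_mod_cast c1
      have c2' : n2 < n1 + 1 := by exact_mod_cast c2
      omega
    exact hne this
  have hsum : ∑' n : ℕ, m ((n : ℝ)) ≤ ∫⁻ z, N z ∂(volume : Measure E') := by
    rw [← lintegral_iUnion (fun n : ℕ => hSlm _) hdisj N]
    exact setLIntegral_le_lintegral _ _
  have hm0 : m 0 = 0 := by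
    by_contra h0
    have h1 : ∑' _ : ℕ, m 0 = ⊤ := ENNReal.tsum_const_eq_top_of_ne_zero h0
    rw [tsum_congr (fun n : ℕ => hconst ((n : ℝ)))] at hsum
    rw [h1] at hsum
    exact htot.ne (top_le_iff.mp hsum)
  have hdisjZ : Pairwise (Function.onFun Disjoint fun n : ℤ => Sl (n : ℝ)) := by
    intro n1 n2 hne
    simp only [Function.onFun, Set.disjoint_left]
    intro z hz1 hz2
    simp only [Sl, Set.mem_setOf_eq, Set.mem_Ico] at hz1 hz2
    have : n1 = n2 := by
      have c1 : (n1 : ℝ) < n2 + 1 := lt_of_le_of_lt hz1.1 hz2.2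
      have c2 : (n2 : ℝ) < n1 + 1 := lt_of_le_of_lt hz2.1 hz1.2
      have c1' : n1 < n2 + 1 := by exact_mod_cast c1
      have c2' : n2 < n1 + 1 := by exact_mod_cast c2
      omega
    exact hne this
  have huniv : (Set.univ : Set E') = ⋃ n : ℤ, Sl ((n : ℝ)) := by
    ext z
    simp only [Set.mem_univ, true_iff, Set.mem_iUnion, Sl, Set.mem_setOf_eq, Set.mem_Ico]
    exact ⟨⌊z j⌋, Int.floor_le _, Int.lt_floor_add_one _⟩
  have hNz : ∫⁻ z, N z ∂(volume : Measure E') = 0 := by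
    rw [← setLIntegral_univ, huniv, lintegral_iUnion (fun n : ℤ => hSlm _) hdisjZ N]
    have : ∀ n : ℤ, m ((n : ℝ)) = 0 := fun n => (hconst _).trans hm0
    simp only [hmdef] at this
    rw [tsum_congr (fun n : ℤ => this n)]
    simp
  have hN0 : N =ᵐ[(volume : Measure E')] 0 := (lintegral_eq_zero_iff hNm).mp hNz
  rw [Lp.eq_zero_iff_ae_eq_zero]
  have hG0 : ∀ᵐ z ∂(volume : Measure E'), z ∈ A → (⇑g) z = 0 := by
    filter_upwards [hN0] with z hz hzA
    simp only [N, Pi.zero_apply] at hz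
    have h1 : (‖G z‖₊ : ℝ≥0∞) = 0 := pow_eq_zero_iff (two_ne_zero) |>.mp hz
    have h2 : G z = 0 := by simpa using h1
    rwa [hGdef, Set.indicator_of_mem hzA] at h2
  exact (ae_restrict_iff' hAm).mpr hG0
end Aux

set_option maxHeartbeats 1000000 in
/-- For `P = ℝ₊^d` (`d ≥ 2`) and `A = ∏ᵢ ℝᵢ` with each `ℝᵢ ∈ {ℝ, ℝ₊}` and at least one
factor equal to `ℝ₊`, the shift semigroup on `L²(A, k)` admits no nonzero `P`-additive
cocycle. -/
theorem shift_no_nontrivial_additive_cocycle {d : ℕ} (hd : 2 ≤ d)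
    {k : Type*} [NormedAddCommGroup k] [InnerProductSpace ℂ k] [CompleteSpace k]
    [SecondCountableTopology k]
    (P : Set (EuclideanSpace ℝ (Fin d)))
    (hP : P = {y : EuclideanSpace ℝ (Fin d) | ∀ i, 0 ≤ y i})
    (halfIdx : Set (Fin d)) (hhalf_ne : halfIdx.Nonempty)
    (A : Set (EuclideanSpace ℝ (Fin d)))
    (hA : A = {y : EuclideanSpace ℝ (Fin d) | ∀ i ∈ halfIdx, 0 ≤ y i})
    (V : EuclideanSpace ℝ (Fin d) →
      (Lp k 2 (volume.restrict A) →L[ℂ] Lp k 2 (volume.restrict A)))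
    (hV : ∀ x ∈ P, ∀ f : Lp k 2 (volume.restrict A),
      (V x f : EuclideanSpace ℝ (Fin d) → k) =ᵐ[volume.restrict A]
        fun y => Set.indicator A (⇑f) (y - x))
    (h : EuclideanSpace ℝ (Fin d) → Lp k 2 (volume.restrict A))
    (hcont : ContinuousOn h P)
    (hker : ∀ x ∈ P, ContinuousLinearMap.adjoint (V x) (h x) = 0)
    (hcoc : ∀ x ∈ P, ∀ y ∈ P, h (x + y) = h x + V x (h y)) :
    ∀ x ∈ P, h x = 0 := by
  have hAm : MeasurableSet A := by
    rw [hA]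
    have hrw : {y : EuclideanSpace ℝ (Fin d) | ∀ i ∈ halfIdx, 0 ≤ y i}
        = ⋂ i ∈ halfIdx, {y : EuclideanSpace ℝ (Fin d) | 0 ≤ y i} := by
      ext y; simp
    rw [hrw]
    exact MeasurableSet.biInter (Set.to_countable _) fun i _ =>
      measurableSet_le measurable_const (EuclideanSpace.proj (𝕜 := ℝ) i).continuous.measurable
  have hPA : ∀ v ∈ P, ∀ z ∈ A, z + v ∈ A := by
    intro v hv z hz
    rw [hA] at hz ⊢
    rw [hP] at hv
    intro i hi
    have hc : (z + v) i = z i + v i := by simp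
    rw [hc]
    exact add_nonneg (hz i hi) (hv i)
  have hsingleP : ∀ (j : Fin d) (t' : ℝ), 0 ≤ t' → EuclideanSpace.single j t' ∈ P := by
    intro j t' ht'
    rw [hP]
    intro i
    rw [EuclideanSpace.single_apply]
    split
    · exact ht'
    · exact le_refl _
  have key : ∀ w ∈ P, ∀ j : Fin d, w j = 0 → h w = 0 := by
    intro w hw j hwj
    have hinvV : ∀ t' : ℝ, 0 ≤ t' → V (EuclideanSpace.single j t') (h w) = h w := by
      intro t' ht'
      set t : EuclideanSpace ℝ (Fin d) := EuclideanSpace.single j t' with htdef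
      have htP : t ∈ P := hsingleP j t' ht'
      have hcoc1 : h w + V w (h t) = h t + V t (h w) := by
        have e1 := hcoc w hw t htP
        have e2 := hcoc t htP w hw
        rw [add_comm t w] at e2
        rw [← e1, ← e2]
      have hg0 : ∀ u : Lp k 2 (volume.restrict A), @inner ℂ _ _ (V t u) (h t) = 0 := by
        intro u
        rw [← ContinuousLinearMap.adjoint_inner_right, hker t htP, inner_zero_right]
      have hgv := aux_hvan hAm t (fun u0 => V t u0) (fun u0 => hV t htP u0) (h t) hg0
      have himp : ∀ y : EuclideanSpace ℝ (Fin d), y - w ∈ A → y - t ∈ A → y - w - t ∈ A := by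
        intro y h1 h2
        rw [hA] at h1 h2 ⊢
        intro i hi
        have hc : (y - w - t) i = y i - w i - t i := by simp
        rw [hc]
        by_cases hij : i = j
        · subst hij
          rw [hwj, sub_zero]
          have h2' := h2 i hi
          have hc2 : (y - t) i = y i - t i := by simp
          rw [hc2] at h2'
          exact h2'
        · have hti : t i = 0 := by rw [htdef, EuclideanSpace.single_apply, if_neg hij]
          rw [hti, sub_zero]
          have h1' := h1 i hi
          have hc1 : (y - w) i = y i - w i := by simp
          rw [hc1] at h1'
          exact h1'
      have horth : @inner ℂ _ _ (V w (h t)) (V t (h w)) = 0 :=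
        aux_orth hAm w t himp (h t) (h w) (V w (h t)) (V t (h w))
          (hV w hw (h t)) (hV t htP (h w)) hgv
      have hiso : @inner ℂ _ _ (V t (h w)) (V t (h w)) = @inner ℂ _ _ (h w) (h w) :=
        aux_isom hAm t (hPA t htP) (h w) (h w) _ _ (hV t htP _) (hV t htP _)
      have hthw : @inner ℂ _ _ (h t) (V t (h w)) = 0 := by
        rw [← inner_conj_symm, hg0 (h w), map_zero]
      have hpair : @inner ℂ _ _ (h w) (V t (h w)) = @inner ℂ _ _ (h w) (h w) := by
        have hp := congrArg (fun v => @inner ℂ _ _ v (V t (h w))) hcoc1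
        simp only [inner_add_left] at hp
        rw [horth, hthw, hiso] at hp
        simpa using hp
      have hnsq : ‖V t (h w)‖ ^ 2 = ‖h w‖ ^ 2 := by
        have := hiso
        rw [inner_self_eq_norm_sq_to_K, inner_self_eq_norm_sq_to_K] at this
        exact_mod_cast this
      have hre : RCLike.re (@inner ℂ _ _ (V t (h w)) (h w)) = ‖h w‖ ^ 2 := by
        rw [← inner_conj_symm, hpair, inner_self_eq_norm_sq_to_K]
        simp [← Complex.ofReal_pow]
      have hzero : ‖V t (h w) - h w‖ ^ 2 = 0 := by
        rw [@norm_sub_sq ℂ, hre, hnsq]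
        ring
      have hsub : V t (h w) - h w = 0 := by
        have h9 := pow_eq_zero_iff (two_ne_zero) |>.mp hzero
        rwa [norm_eq_zero] at h9
      exact sub_eq_zero.mp hsub
    apply aux_slab hAm j (h w)
    intro t' ht'
    set t : EuclideanSpace ℝ (Fin d) := EuclideanSpace.single j t' with htdef
    have htP : t ∈ P := hsingleP j t' ht'
    have h1 : ⇑(h w) =ᵐ[volume.restrict A] fun y => A.indicator (⇑(h w)) (y - t) := by
      have h0 := hV t htP (h w)
      rwa [hinvV t' ht'] at h0
    have h2 : ∀ᵐ y ∂(volume : Measure (EuclideanSpace ℝ (Fin d))),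
        y ∈ A → (h w) y = A.indicator (⇑(h w)) (y - t) := (ae_restrict_iff' hAm).mp h1
    filter_upwards [h2] with y hy
    by_cases hyA : y ∈ A
    · rw [Set.indicator_of_mem hyA, hy hyA]
    · rw [Set.indicator_of_notMem hyA]
      by_cases hyt : y - t ∈ A
      · exact absurd (by simpa using hPA t htP _ hyt) hyA
      · rw [Set.indicator_of_notMem hyt]
  intro x hx
  set j0 : Fin d := ⟨0, by omega⟩ with hj0def
  set j1 : Fin d := ⟨1, by omega⟩ with hj1def
  set z : EuclideanSpace ℝ (Fin d) := EuclideanSpace.single j0 (x j0) with hzdef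
  set y : EuclideanSpace ℝ (Fin d) := x - z with hydef
  have hx0 : 0 ≤ x j0 := by rw [hP] at hx; exact hx j0
  have hzP : z ∈ P := hsingleP j0 (x j0) hx0
  have hyP : y ∈ P := by
    rw [hP]
    intro i
    have hyi : y i = x i - z i := by simp [hydef]
    rw [hyi, hzdef, EuclideanSpace.single_apply]
    by_cases hij : i = j0
    · rw [if_pos hij, hij]
      simp
    · rw [if_neg hij, sub_zero]
      rw [hP] at hx
      exact hx i
  have hyj0 : y j0 = 0 := by
    have hyi : y j0 = x j0 - z j0 := by simp [hydef]
    rw [hyi, hzdef, EuclideanSpace.single_apply, if_pos rfl, sub_self]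
  have hzj1 : z j1 = 0 := by
    rw [hzdef, EuclideanSpace.single_apply, if_neg (by simp [hj0def, hj1def, Fin.ext_iff])]
  have hxyz : x = y + z := (sub_add_cancel x z).symm
  rw [hxyz, hcoc y hyP z hzP, key y hyP j0 hyj0, key z hzP j1 hzj1]
  simp
end
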